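/- arXiv:1103.3570 — 14 statements merged into one kernel-verified Lean document; each statement's English description precedes it below -/
import Mathlib

section
/- A connected graph G of order n has metric dimension n−1 if and only if G is the complete graph K_n. -/
open SimpleGraph Finset

variable {V : Type*}

/-- A finite set `W` of vertices resolves `G` if distinct vertices have
distinct vectors of distances to the vertices of `W`. -/
def SimpleGraph.IsResolvingSet (G : SimpleGraph V) (W : Finset V) : Prop :=
  ∀ u v : V, (∀ w ∈ W, G.dist u w = G.dist v w) → u = v

/-- The metric dimension of `G`: the minimum cardinality of a resolving set. -/
noncomputable def SimpleGraph.metricDim (G : SimpleGraph V) [Fintype V] : ℕ :=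
  sInf {k | ∃ W : Finset V, W.card = k ∧ G.IsResolvingSet W}

/-- `G` is randomly `k`-dimensional: `G` is connected, has metric dimension `k`,
and every `k`-subset of vertices is a (minimum) resolving set, i.e. a basis. -/
def SimpleGraph.RandomlyKDim (G : SimpleGraph V) [Fintype V] (k : ℕ) : Prop :=
  G.Connected ∧ G.metricDim = k ∧ ∀ W : Finset V, W.card = k → G.IsResolvingSet W

/-- The resolving number of `G`: the minimum `k` such that every `k`-subset of
vertices is a resolving set. -/
noncomputable def SimpleGraph.resolvingNumber (G : SimpleGraph V) [Fintype V] : ℕ :=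
  sInf {k | ∀ W : Finset V, W.card = k → G.IsResolvingSet W}

theorem stmt2 [Fintype V] (G : SimpleGraph V) (hG : G.Connected) :
    G.metricDim = Fintype.card V - 1 ↔ G = ⊤ := by
  classical
  constructor
  · intro h
    by_contra hne
    -- find nonadjacent distinct vertices
    have hex : ∃ u v : V, u ≠ v ∧ ¬ G.Adj u v := by
      by_contra h'
      push_neg at h'
      apply hne
      ext a b
      simp only [top_adj]
      exact ⟨fun hab => hab.ne, fun hab => h' a b hab⟩
    obtain ⟨u, v, huv, hnadj⟩ := hex
    set d := G.dist u v with hd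
    have hd0 : d ≠ 0 := by
      intro h0
      exact huv (hG.dist_eq_zero_iff.mp h0)
    have hd1 : d ≠ 1 := by
      intro h1
      exact hnadj (SimpleGraph.dist_eq_one_iff_adj.mp h1)
    have hd2 : 2 ≤ d := by omega
    obtain ⟨p, hp⟩ := (hG u v).exists_walk_length_eq_dist
    rw [← hd] at hp
    cases p with
    | nil => simp only [SimpleGraph.Walk.length_nil] at hp; omega
    | cons hadj q =>
      rename_i w
      simp only [SimpleGraph.Walk.length_cons] at hp
      have hwv : G.dist w v = d - 1 := by
        have h1 : G.dist w v ≤ d - 1 := by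
          have hq := G.dist_le q
          omega
        have h2 : d ≤ 1 + G.dist w v := by
          have ht := hG.dist_triangle (u := u) (v := w) (w := v)
          have huw : G.dist u w ≤ 1 := G.dist_le hadj.toWalk
          omega
        omega
      have hwu : w ≠ u := hadj.ne'
      have hvu : v ≠ u := huv.symm
      have hvw : v ≠ w := by
        intro hvw
        rw [hvw, SimpleGraph.dist_self] at hwv
        omega
      set W : Finset V := (univ.erase u).erase w with hW
      have hWcard : W.card = Fintype.card V - 2 := by
        rw [hW, Finset.card_erase_of_mem (by simp [hwu]), Finset.card_erase_of_mem (by simp)]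
        simp only [Finset.card_univ]
        omega
      have hvW : v ∈ W := by simp [hW, hvw, hvu]
      have hres : G.IsResolvingSet W := by
        intro x y hxy
        by_contra hxyne
        by_cases hxW : x ∈ W
        · have := hxy x hxW
          simp only [SimpleGraph.dist_self] at this
          exact hxyne (hG.dist_eq_zero_iff.mp this.symm).symm
        by_cases hyW : y ∈ W
        · have := hxy y hyW
          simp only [SimpleGraph.dist_self] at this
          exact hxyne (hG.dist_eq_zero_iff.mp this)
        · have hx' : x = w ∨ x = u := by
            by_contra hx
            push_neg at hx
            exact hxW (by simp [hW, hx.1, hx.2])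
          have hy' : y = w ∨ y = u := by
            by_contra hy
            push_neg at hy
            exact hyW (by simp [hW, hy.1, hy.2])
          have hdist := hxy v hvW
          rcases hx' with rfl | rfl <;> rcases hy' with rfl | rfl
          · exact hxyne rfl
          · omega
          · omega
          · exact hxyne rfl
      have hmem : Fintype.card V - 2 ∈
          {k | ∃ W : Finset V, W.card = k ∧ G.IsResolvingSet W} :=
        ⟨W, hWcard, hres⟩
      have hle := Nat.sInf_le hmem
      rw [SimpleGraph.metricDim] at h
      have hcard : 2 ≤ Fintype.card V := Fintype.one_lt_card_iff_nontrivial.mpr ⟨⟨u, v, huv⟩⟩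
      omega
  · intro h
    subst h
    rw [SimpleGraph.metricDim]
    have hmem : Fintype.card V - 1 ∈
        {k | ∃ W : Finset V, W.card = k ∧ (⊤ : SimpleGraph V).IsResolvingSet W} := by
      rcases isEmpty_or_nonempty V with hV | hV
      · refine ⟨∅, by simp [Fintype.card_eq_zero], fun u v _ => isEmptyElim u⟩
      · obtain ⟨x⟩ := hV
        refine ⟨univ.erase x, by simp [Finset.card_erase_of_mem, Finset.card_univ], ?_⟩
        intro a b hab
        by_contra habne
        by_cases haW : a ∈ univ.erase x
        · have := hab a haW
          simp only [SimpleGraph.dist_self] at this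
          exact habne (hG.dist_eq_zero_iff.mp this.symm).symm
        by_cases hbW : b ∈ univ.erase x
        · have := hab b hbW
          simp only [SimpleGraph.dist_self] at this
          exact habne (hG.dist_eq_zero_iff.mp this)
        · simp only [Finset.mem_erase, Finset.mem_univ, and_true, not_not] at haW hbW
          exact habne (haW.trans hbW.symm)
    have hlb : ∀ k ∈ {k | ∃ W : Finset V, W.card = k ∧
        (⊤ : SimpleGraph V).IsResolvingSet W}, Fintype.card V - 1 ≤ k := by
      rintro k ⟨W, hWc, hWres⟩
      by_contra hk
      push_neg at hk
      have hcc : 2 ≤ Wᶜ.card := by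
        have := Finset.card_compl W
        omega
      obtain ⟨a, ha, b, hb, hab⟩ := Finset.one_lt_card.mp hcc
      rw [Finset.mem_compl] at ha hb
      have : a = b := by
        apply hWres
        intro w hw
        have hwa : a ≠ w := fun h => ha (h ▸ hw)
        have hwb : b ≠ w := fun h => hb (h ▸ hw)
        rw [SimpleGraph.dist_eq_one_iff_adj.mpr (by simp [hwa]),
          SimpleGraph.dist_eq_one_iff_adj.mpr (by simp [hwb])]
      exact hab this
    exact le_antisymm (Nat.sInf_le hmem) (hlb _ (Nat.sInf_mem ⟨_, hmem⟩))
end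

section
/- If G is a randomly k-dimensional graph that is not complete, then for each pair of distinct vertices u, v of G, N(v)\{u} ≠ N(u)\{v}. -/
open SimpleGraph Finset

variable {V : Type*}

lemma twin_dist_le (G : SimpleGraph V) (hc : G.Connected) {u v : V}
    (h : G.neighborSet v \ {u} = G.neighborSet u \ {v}) {w : V} (hwu : w ≠ u) :
    G.dist v w ≤ G.dist u w := by
  obtain ⟨p, hp⟩ := hc.exists_walk_length_eq_dist u w
  cases p with
  | nil => exact absurd rfl hwu.symm
  | cons hadj q =>
    rename_i x
    by_cases hx : x = v
    · subst hx
      calc G.dist x w ≤ q.length := G.dist_le q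
        _ ≤ (SimpleGraph.Walk.cons hadj q).length := by simp [SimpleGraph.Walk.length_cons]
        _ = G.dist u w := hp
    · have hxv : G.Adj v x := by
        have : x ∈ G.neighborSet u \ {v} := ⟨hadj, hx⟩
        rw [← h] at this
        exact this.1
      calc G.dist v w ≤ (SimpleGraph.Walk.cons hxv q).length := G.dist_le _
        _ = (SimpleGraph.Walk.cons hadj q).length := by simp [SimpleGraph.Walk.length_cons]
        _ = G.dist u w := hp

/-- If G is connected and not complete, there is a resolving set of size n-2. -/
lemma exists_resolving_sub2 [Fintype V] [DecidableEq V] (G : SimpleGraph V)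
    (hc : G.Connected) (hne : G ≠ ⊤) :
    ∃ W : Finset V, W.card = Fintype.card V - 2 ∧ G.IsResolvingSet W := by
  -- find nonadjacent a ≠ b
  obtain ⟨a, b, hab, hnadj⟩ : ∃ a b : V, a ≠ b ∧ ¬ G.Adj a b := by
    by_contra hcon
    push_neg at hcon
    exact hne (by ext a b; simp only [top_adj]; exact ⟨fun h => h.ne, fun h => hcon a b h⟩)
  have hd0 : G.dist a b ≠ 0 := (hc.dist_eq_zero_iff).ne.mpr hab
  have hd1 : G.dist a b ≠ 1 := fun h => hnadj (SimpleGraph.dist_eq_one_iff_adj.mp h)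
  have hd2 : 2 ≤ G.dist a b := by omega
  obtain ⟨p, hp⟩ := hc.exists_walk_length_eq_dist a b
  cases p with
  | nil => exact absurd rfl hab
  | cons hadj q =>
    rename_i x
    have hxb : G.dist x b = G.dist a b - 1 := by
      have h1 : G.dist x b ≤ q.length := G.dist_le q
      have h2 : G.dist a b ≤ 1 + G.dist x b := by
        calc G.dist a b ≤ G.dist a x + G.dist x b := hc.dist_triangle
          _ ≤ 1 + G.dist x b := by
              have : G.dist a x ≤ 1 := by
                have := G.dist_le (SimpleGraph.Walk.cons hadj SimpleGraph.Walk.nil)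
                simpa using this
              omega
      have h3 : (SimpleGraph.Walk.cons hadj q).length = 1 + q.length := by
        simp [SimpleGraph.Walk.length_cons]; omega
      omega
    have hax : a ≠ x := hadj.ne
    have hbx : b ≠ x := by
      intro h
      rw [← h] at hxb
      have h0 : G.dist b b = 0 := (hc.dist_eq_zero_iff).mpr rfl
      omega
    refine ⟨Finset.univ \ {a, x}, ?_, ?_⟩
    · rw [Finset.card_sdiff_of_subset (Finset.subset_univ _)]
      simp [Finset.card_insert_of_notMem, hax, Finset.card_univ]
    · intro p q hpq
      by_contra hne2
      have key : ∀ z : V, z ∉ ({a, x} : Finset V) → z ≠ p ∧ z ≠ q := by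
        intro z hz
        constructor
        · intro h; subst h
          have := hpq z (Finset.mem_sdiff.mpr ⟨Finset.mem_univ _, hz⟩)
          rw [(hc.dist_eq_zero_iff).mpr rfl] at this
          exact hne2 ((hc.dist_eq_zero_iff).mp this.symm).symm
        · intro h; subst h
          have := hpq z (Finset.mem_sdiff.mpr ⟨Finset.mem_univ _, hz⟩)
          rw [(hc.dist_eq_zero_iff).mpr rfl] at this
          exact hne2 ((hc.dist_eq_zero_iff).mp this)
      -- so p, q ∈ {a, x}
      have hp' : p ∈ ({a, x} : Finset V) := by
        by_contra h; exact (key p h).1 rfl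
      have hq' : q ∈ ({a, x} : Finset V) := by
        by_contra h; exact (key q h).2 rfl
      have hbW : b ∈ Finset.univ \ ({a, x} : Finset V) := by
        simp [hab.symm, hbx]
      have hdist := hpq b hbW
      simp only [Finset.mem_insert, Finset.mem_singleton] at hp' hq'
      rcases hp' with rfl | rfl <;> rcases hq' with rfl | rfl <;>
        first
          | exact hne2 rfl
          | omega

theorem stmt3 [Fintype V] (G : SimpleGraph V) (k : ℕ)
    (hG : G.RandomlyKDim k) (hne : G ≠ ⊤) :
    ∀ u v : V, u ≠ v → G.neighborSet v \ {u} ≠ G.neighborSet u \ {v} := by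
  classical
  obtain ⟨hc, hdim, hall⟩ := hG
  intro u v huv htwin
  -- distances from u and v agree on all other vertices
  have hdist : ∀ w : V, w ≠ u → w ≠ v → G.dist u w = G.dist v w := by
    intro w hwu hwv
    exact le_antisymm (twin_dist_le G hc htwin.symm hwv) (twin_dist_le G hc htwin hwu)
  -- k ≤ n - 2
  have hk : k ≤ Fintype.card V - 2 := by
    obtain ⟨W, hWcard, hWres⟩ := exists_resolving_sub2 G hc hne
    rw [← hdim]
    exact Nat.sInf_le ⟨W, hWcard, hWres⟩
  have hcard : (Finset.univ \ ({u, v} : Finset V)).card = Fintype.card V - 2 := by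
    rw [Finset.card_sdiff_of_subset (Finset.subset_univ _)]
    simp [Finset.card_insert_of_notMem, huv, Finset.card_univ]
  obtain ⟨W, hWsub, hWcard⟩ := Finset.exists_subset_card_eq (hcard ▸ hk)
  have hres := hall W hWcard
  apply huv
  apply hres
  intro w hw
  have hw' := hWsub hw
  rw [Finset.mem_sdiff] at hw'
  simp only [Finset.mem_insert, Finset.mem_singleton, not_or] at hw'
  exact hdist w hw'.2.1 hw'.2.2
end

section
/- If k ≥ 2, then every randomly k-dimensional graph is 2-connected. -/
open SimpleGraph Finset

variable {V : Type*}

/-- Reachability by walks avoiding the vertex `v`. -/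
def AvdReach (G : SimpleGraph V) (v x y : V) : Prop := ∃ p : G.Walk x y, v ∉ p.support

namespace AvdReach

variable {G : SimpleGraph V} {v x y z : V}

lemma refl (hx : x ≠ v) : AvdReach G v x x := ⟨Walk.nil, by simp [Ne.symm hx]⟩

lemma symm (h : AvdReach G v x y) : AvdReach G v y x := by
  obtain ⟨p, hp⟩ := h
  exact ⟨p.reverse, by simpa [Walk.support_reverse] using hp⟩

lemma trans (h : AvdReach G v x y) (h' : AvdReach G v y z) : AvdReach G v x z := by
  obtain ⟨p, hp⟩ := h; obtain ⟨q, hq⟩ := h'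
  exact ⟨p.append q, by
    rw [Walk.mem_support_append_iff]; rintro (h | h) <;> [exact hp h; exact hq h]⟩

lemma ne_start (h : AvdReach G v x y) : x ≠ v := by
  obtain ⟨p, hp⟩ := h; rintro rfl; exact hp p.start_mem_support

lemma ne_end (h : AvdReach G v x y) : y ≠ v := by
  obtain ⟨p, hp⟩ := h; rintro rfl; exact hp p.end_mem_support

lemma of_adj (h : G.Adj x y) (hx : x ≠ v) (hy : y ≠ v) : AvdReach G v x y :=
  ⟨Walk.cons h Walk.nil, by simp [Ne.symm hx, Ne.symm hy]⟩

end AvdReach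

/-- If `x` and `w` are not connected avoiding `v`, every geodesic passes `v`. -/
lemma dist_add_of_not_avdReach {G : SimpleGraph V} {v x w : V} (hc : G.Connected)
    (h : ¬ AvdReach G v x w) : G.dist x w = G.dist x v + G.dist v w := by
  classical
  obtain ⟨p, hp⟩ := (hc x w).exists_walk_length_eq_dist
  have hv : v ∈ p.support := by
    by_contra hvp; exact h ⟨p, hvp⟩
  have hlen : (p.takeUntil v hv).length + (p.dropUntil v hv).length = p.length := by
    conv_rhs => rw [← p.take_spec hv]
    rw [Walk.length_append]
  have h1 : G.dist x v ≤ (p.takeUntil v hv).length := dist_le _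
  have h2 : G.dist v w ≤ (p.dropUntil v hv).length := dist_le _
  have h3 : G.dist x w ≤ G.dist x v + G.dist v w := hc.dist_triangle
  omega

/-- Level-`s` vertex on a geodesic from `x` to `v`, within the `v`-avoiding component. -/
lemma exists_level {G : SimpleGraph V} {v : V} (hc : G.Connected) :
    ∀ n x, G.dist x v = n → x ≠ v → ∀ s, 1 ≤ s → s ≤ n →
      ∃ z, AvdReach G v x z ∧ G.dist z v = s ∧ G.dist x z = n - s := by
  intro n
  induction n using Nat.strong_induction_on with
  | _ n ih =>
    intro x hdx hx s hs1 hs2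
    rcases eq_or_lt_of_le hs2 with rfl | hlt
    · exact ⟨x, ⟨Walk.nil, by simp [Ne.symm hx]⟩, hdx, by simp⟩
    · obtain ⟨p, hp⟩ := (hc x v).exists_walk_length_eq_dist
      cases p with
      | nil => exact absurd rfl hx
      | cons e p' =>
        rename_i m
        have hp'len : p'.length = n - 1 := by
          simp only [Walk.length_cons] at hp; omega
        have hmv1 : G.dist m v ≤ n - 1 := hp'len ▸ dist_le p'
        have hxm : G.dist x m ≤ 1 := by
          have h1 : (Walk.cons e (Walk.nil : G.Walk m m)).length = 1 := by simp
          calc G.dist x m ≤ _ := dist_le (Walk.cons e Walk.nil)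
            _ = 1 := h1
        have htri : G.dist x v ≤ G.dist x m + G.dist m v := hc.dist_triangle
        have hn1 : 1 ≤ n := le_trans hs1 hs2
        have hmv : G.dist m v = n - 1 := by omega
        have hm : m ≠ v := by
          intro h'
          rw [h', SimpleGraph.dist_self] at hmv
          omega
        obtain ⟨z, hz1, hz2, hz3⟩ := ih (n-1) (by omega) m hmv hm s hs1 (by omega)
        refine ⟨z, AvdReach.trans (AvdReach.of_adj e hx hm) hz1, hz2, ?_⟩
        have hle : G.dist x z ≤ G.dist x m + G.dist m z := hc.dist_triangle
        have hge : G.dist x v ≤ G.dist x z + G.dist z v := hc.dist_triangle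
        omega

theorem stmt4 [Fintype V] (G : SimpleGraph V) (k : ℕ)
    (hk : 2 ≤ k) (hG : G.RandomlyKDim k) :
    3 ≤ Fintype.card V ∧ ∀ v : V, (G.induce ({v}ᶜ : Set V)).Connected := by
  classical
  obtain ⟨hconn, hdim, hres⟩ := hG
  have dist0 : ∀ p q : V, G.dist p q = 0 → p = q := fun p q h => (hconn.dist_eq_zero_iff).mp h
  have dpos : ∀ p q : V, p ≠ q → 1 ≤ G.dist p q := fun p q h =>
    Nat.one_le_iff_ne_zero.mpr (fun h0 => h (dist0 _ _ h0))
  haveI hVne : Nonempty V := hconn.nonempty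
  obtain ⟨u0⟩ := id hVne
  -- removing one vertex from the full vertex set still resolves
  have herase : ∀ u : V, G.IsResolvingSet (Finset.univ.erase u) := by
    intro u p q h
    by_cases hp : p = u
    · by_cases hq : q = u
      · rw [hp, hq]
      · have h2 := h q (Finset.mem_erase.mpr ⟨hq, Finset.mem_univ _⟩)
        rw [SimpleGraph.dist_self] at h2
        exact dist0 p q h2
    · have h2 := h p (Finset.mem_erase.mpr ⟨hp, Finset.mem_univ _⟩)
      rw [SimpleGraph.dist_self] at h2
      exact (dist0 q p h2.symm).symm
  have hsInf_le : ∀ (W : Finset V), G.IsResolvingSet W → G.metricDim ≤ W.card := by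
    intro W hW; exact Nat.sInf_le ⟨W, rfl, hW⟩
  have hcardV : k + 1 ≤ Fintype.card V := by
    have h1 : G.metricDim ≤ (Finset.univ.erase u0).card := hsInf_le _ (herase u0)
    rw [Finset.card_erase_of_mem (Finset.mem_univ _), Finset.card_univ, hdim] at h1
    have h2 : 1 ≤ Fintype.card V := Fintype.card_pos
    omega
  refine ⟨by omega, ?_⟩
  intro v
  by_contra hcon
  -- extract a disconnection pair
  haveI : Nontrivial V := Fintype.one_lt_card_iff_nontrivial.mp (by omega)
  obtain ⟨u1, hu1⟩ := exists_ne (α := V) v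
  · have hpre : ¬ (G.induce ({v}ᶜ : Set V)).Preconnected := by
      intro h
      haveI : Nonempty ({v}ᶜ : Set V) := ⟨⟨u1, by simp [hu1]⟩⟩
      exact hcon ⟨h⟩
    rw [SimpleGraph.Preconnected] at hpre
    push_neg at hpre
    obtain ⟨A, B, hABnr⟩ := hpre
    have hind : ∀ (x y : V) (p : G.Walk x y), v ∉ p.support →
        ∀ (hx : x ∈ ({v}ᶜ : Set V)) (hy : y ∈ ({v}ᶜ : Set V)),
        (G.induce ({v}ᶜ : Set V)).Reachable ⟨x, hx⟩ ⟨y, hy⟩ := by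
      intro x y p
      induction p with
      | nil => intro _ hx hy; exact Reachable.refl _
      | @cons x' m y' e p' ih =>
        intro hsup hx hy
        rw [Walk.support_cons, List.mem_cons] at hsup
        push_neg at hsup
        have hm : m ∈ ({v}ᶜ : Set V) := by
          simp only [Set.mem_compl_iff, Set.mem_singleton_iff]
          intro h'
          exact hsup.2 (h' ▸ p'.start_mem_support)
        have hadj : (G.induce ({v}ᶜ : Set V)).Adj ⟨x', hx⟩ ⟨m, hm⟩ := e
        exact (hadj.reachable).trans (ih hsup.2 hm hy)
    have hx0v : (A : V) ≠ v := fun h => A.2 (by simp [h])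
    have hy0v : (B : V) ≠ v := fun h => B.2 (by simp [h])
    have hx0y0 : ¬ AvdReach G v A.1 B.1 := by
      rintro ⟨p, hp⟩
      exact hABnr (hind A.1 B.1 p hp A.2 B.2)
    have H1 : ∀ p q : V, p ≠ q →
        (Finset.univ.filter (fun w => G.dist p w = G.dist q w)).card ≤ k - 1 := by
      intro p q hpq
      by_contra hbig
      push_neg at hbig
      have hge : k ≤ (Finset.univ.filter (fun w => G.dist p w = G.dist q w)).card := by omega
      obtain ⟨W, hWsub, hWcard⟩ := Finset.exists_subset_card_eq hge
      exact hpq (hres W hWcard p q (fun w hw => (Finset.mem_filter.mp (hWsub hw)).2))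
    have H2 : ∀ W : Finset V, W.card = k - 1 →
        ∃ p q : V, p ≠ q ∧ ∀ w ∈ W, G.dist p w = G.dist q w := by
      intro W hW
      by_contra hno
      push_neg at hno
      have hWres : G.IsResolvingSet W := by
        intro a b hab
        by_contra hne
        obtain ⟨w, hwW, hwne⟩ := hno a b hne
        exact hwne (hab w hwW)
      have := hsInf_le W hWres
      rw [hdim, hW] at this
      omega
    by_cases hQ : ∃ x y : V, x ≠ y ∧ AvdReach G v x y ∧ G.dist x v = G.dist y v
    · -- some component contains two vertices at equal distance from v
      obtain ⟨xb, yb, hxyne, hxyr, hlvl⟩ := hQ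
      set T := Finset.univ.filter (fun w => w ≠ v ∧ ¬ AvdReach G v xb w) with hT
      set C := Finset.univ.filter (fun w => AvdReach G v xb w) with hC
      have hvT : v ∉ T := by simp [hT]
      have hsub : insert v T ⊆ Finset.univ.filter (fun w => G.dist xb w = G.dist yb w) := by
        intro w hw
        rw [Finset.mem_insert] at hw
        rcases hw with rfl | hw
        · exact Finset.mem_filter.mpr ⟨Finset.mem_univ _, hlvl⟩
        · obtain ⟨-, hwv, hnr⟩ := Finset.mem_filter.mp hw
          have hnr' : ¬ AvdReach G v yb w := fun h => hnr (hxyr.trans h)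
          have h1 := dist_add_of_not_avdReach hconn hnr
          have h2 := dist_add_of_not_avdReach hconn hnr'
          exact Finset.mem_filter.mpr ⟨Finset.mem_univ _, by rw [h1, h2, hlvl]⟩
      have hTcard : T.card + 1 ≤ k - 1 := by
        have h1 := H1 xb yb hxyne
        have hc2 := Finset.card_le_card hsub
        rw [Finset.card_insert_of_notMem hvT] at hc2
        omega
      have hTne : T.Nonempty := by
        by_cases h : AvdReach G v xb A.1
        · exact ⟨B.1, Finset.mem_filter.mpr
            ⟨Finset.mem_univ _, hy0v, fun h' => hx0y0 (h.symm.trans h')⟩⟩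
        · exact ⟨A.1, Finset.mem_filter.mpr ⟨Finset.mem_univ _, hx0v, h⟩⟩
      have hCT : (Finset.univ.erase v) ⊆ C ∪ T := by
        intro w hw
        rw [Finset.mem_erase] at hw
        by_cases h : AvdReach G v xb w
        · exact Finset.mem_union_left _ (Finset.mem_filter.mpr ⟨Finset.mem_univ _, h⟩)
        · exact Finset.mem_union_right _ (Finset.mem_filter.mpr ⟨Finset.mem_univ _, hw.1, h⟩)
      have hCTcard : Fintype.card V - 1 ≤ C.card + T.card := by
        have h1 := Finset.card_le_card hCT
        have h2 := Finset.card_union_le C T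
        rw [Finset.card_erase_of_mem (Finset.mem_univ _), Finset.card_univ] at h1
        omega
      obtain ⟨Bs, hBsub, hBcard⟩ := Finset.exists_subset_card_eq (show k - 1 - T.card ≤ C.card by omega)
      have hdisj : Disjoint T Bs := by
        rw [Finset.disjoint_left]
        intro w hwT hwB
        exact (Finset.mem_filter.mp hwT).2.2 (Finset.mem_filter.mp (hBsub hwB)).2
      set W0 := T ∪ Bs with hW0
      have hW0card : W0.card = k - 1 := by
        rw [hW0, Finset.card_union_of_disjoint hdisj, hBcard]
        omega
      obtain ⟨p, q, hpq, heq⟩ := H2 W0 hW0card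
      have hpW : p ∉ W0 := by
        intro hmem
        have h := heq p hmem
        rw [SimpleGraph.dist_self] at h
        exact hpq ((dist0 q p h.symm).symm)
      have hqW : q ∉ W0 := by
        intro hmem
        have h := heq q hmem
        rw [SimpleGraph.dist_self] at h
        exact hpq (dist0 p q h)
      obtain ⟨w0, hw0⟩ := hTne
      have hw0W : w0 ∈ W0 := Finset.mem_union_left _ hw0
      obtain ⟨-, hw0v, hw0r⟩ := Finset.mem_filter.mp hw0
      have hmemC : ∀ r : V, r ∉ W0 → r ≠ v → AvdReach G v xb r := by
        intro r hrW hrv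
        by_contra h
        exact hrW (Finset.mem_union_left _ (Finset.mem_filter.mpr ⟨Finset.mem_univ _, hrv, h⟩))
      have hkey : ∀ a b : V, a ≠ b → a ∉ W0 → b ∉ W0 →
          (∀ w ∈ W0, G.dist a w = G.dist b w) → a ≠ v := by
        intro a b hab haW hbW hab2 hav
        have hbv : b ≠ v := fun h => hab (hav.trans h.symm)
        have hbr : AvdReach G v xb b := hmemC b hbW hbv
        have hnr : ¬ AvdReach G v b w0 := fun h => hw0r (hbr.trans h)
        have hd : G.dist b w0 = G.dist b v + G.dist v w0 := dist_add_of_not_avdReach hconn hnr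
        have h := hab2 w0 hw0W
        rw [hav] at h
        have h1 : 1 ≤ G.dist b v := dpos _ _ hbv
        omega
      have hpv : p ≠ v := hkey p q hpq hpW hqW heq
      have hqv : q ≠ v := hkey q p hpq.symm hqW hpW (fun w hw => (heq w hw).symm)
      have hpr : AvdReach G v xb p := hmemC p hpW hpv
      have hqr : AvdReach G v xb q := hmemC q hqW hqv
      have hplvl : G.dist p v = G.dist q v := by
        have hnp : ¬ AvdReach G v p w0 := fun h => hw0r (hpr.trans h)
        have hnq : ¬ AvdReach G v q w0 := fun h => hw0r (hqr.trans h)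
        have h1 := dist_add_of_not_avdReach hconn hnp
        have h2 := dist_add_of_not_avdReach hconn hnq
        have h := heq w0 hw0W
        omega
      have hvW0 : v ∉ W0 := by
        rw [hW0, Finset.mem_union]
        rintro (h | h)
        · exact hvT h
        · exact (Finset.mem_filter.mp (hBsub h)).2.ne_end rfl
      have hsub2 : insert v W0 ⊆ Finset.univ.filter (fun w => G.dist p w = G.dist q w) := by
        intro w hw
        rw [Finset.mem_insert] at hw
        rcases hw with rfl | hw
        · exact Finset.mem_filter.mpr ⟨Finset.mem_univ _, hplvl⟩
        · exact Finset.mem_filter.mpr ⟨Finset.mem_univ _, heq w hw⟩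
      have h1 := H1 p q hpq
      have hc := Finset.card_le_card hsub2
      rw [Finset.card_insert_of_notMem hvW0, hW0card] at hc
      omega
    · -- all components are injectively levelled: build a small resolving set
      have hInj : ∀ z z' : V, AvdReach G v z z' → G.dist z v = G.dist z' v → z = z' := by
        intro z z' hr hd
        by_contra hne
        exact hQ ⟨z, z', hne, hr, hd⟩
      set Wm := Finset.univ.filter (fun w => w ≠ v ∧ ¬ AvdReach G v A.1 w ∧
        ∀ z, AvdReach G v w z → G.dist z v ≤ G.dist w v) with hWm
      have hmax : ∀ a : V, a ≠ v → ¬ AvdReach G v A.1 a → ∃ w ∈ Wm, AvdReach G v a w := by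
        intro a hav hax
        obtain ⟨w, hwS, hwmax⟩ := Finset.exists_max_image
          (Finset.univ.filter (fun z => AvdReach G v a z)) (fun z => G.dist z v)
          ⟨a, Finset.mem_filter.mpr ⟨Finset.mem_univ _, AvdReach.refl hav⟩⟩
        have hwr : AvdReach G v a w := (Finset.mem_filter.mp hwS).2
        refine ⟨w, Finset.mem_filter.mpr ⟨Finset.mem_univ _, hwr.ne_end,
          fun h => hax (h.trans hwr.symm), fun z hz =>
          hwmax z (Finset.mem_filter.mpr ⟨Finset.mem_univ _, hwr.trans hz⟩)⟩, hwr⟩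
      have L2 : ∀ a w : V, AvdReach G v a w → G.dist a v ≤ G.dist w v →
          G.dist a w = G.dist w v - G.dist a v := by
        intro a w hr hle
        obtain ⟨z, hz1, hz2, hz3⟩ := exists_level hconn (G.dist w v) w rfl hr.ne_end
          (G.dist a v) (dpos _ _ hr.ne_start) hle
        have hza : z = a := hInj z a (hz1.symm.trans hr.symm) (by rw [hz2])
        rw [SimpleGraph.dist_comm, ← hza, hz2]
        exact hz3
      obtain ⟨a, har, hav1, -⟩ := exists_level hconn (G.dist A.1 v) A.1 rfl hx0v 1
        le_rfl (dpos _ _ hx0v)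
      obtain ⟨b, hbr, hbv1, -⟩ := exists_level hconn (G.dist B.1 v) B.1 rfl hy0v 1
        le_rfl (dpos _ _ hy0v)
      have hane : a ≠ b := by
        rintro rfl
        exact hx0y0 (har.trans hbr.symm)
      -- card bound for Wm
      have hWmcard : Wm.card ≤ k - 1 := by
        have hWb1 : (Wm.filter (fun w => AvdReach G v b w)).card ≤ 1 := by
          rw [Finset.card_le_one]
          intro w hw w' hw'
          have hw2 := (Finset.mem_filter.mp hw).2
          have hw2' := (Finset.mem_filter.mp hw').2
          have h1 := (Finset.mem_filter.mp (Finset.mem_filter.mp hw).1).2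
          have h1' := (Finset.mem_filter.mp (Finset.mem_filter.mp hw').1).2
          have hr : AvdReach G v w w' := hw2.symm.trans hw2'
          exact hInj w w' hr (le_antisymm (h1'.2.2 w hr.symm) (h1.2.2 w' hr))
        have hsub3 : insert v (Wm.filter (fun w => ¬ AvdReach G v b w)) ⊆
            Finset.univ.filter (fun w => G.dist a w = G.dist b w) := by
          intro w hw
          rw [Finset.mem_insert] at hw
          rcases hw with rfl | hw
          · exact Finset.mem_filter.mpr ⟨Finset.mem_univ _, by rw [hav1, hbv1]⟩
          · obtain ⟨hwWm, hbw⟩ := Finset.mem_filter.mp hw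
            obtain ⟨-, hwv, hnx0, -⟩ := Finset.mem_filter.mp hwWm
            have hnaw : ¬ AvdReach G v a w := fun h => hnx0 (har.trans h)
            have h1 := dist_add_of_not_avdReach hconn hnaw
            have h2 := dist_add_of_not_avdReach hconn hbw
            exact Finset.mem_filter.mpr ⟨Finset.mem_univ _, by rw [h1, h2, hav1, hbv1]⟩
        have hvmem : v ∉ Wm.filter (fun w => ¬ AvdReach G v b w) := by
          simp [hWm]
        have hc1 := Finset.card_le_card hsub3
        rw [Finset.card_insert_of_notMem hvmem] at hc1
        have h1 := H1 a b hane
        have hsplit := Finset.card_filter_add_card_filter_not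
          (s := Wm) (p := fun w => AvdReach G v b w)
        omega
      -- Wm resolves G
      have hWres : G.IsResolvingSet Wm := by
        intro p q heq
        by_contra hne
        obtain ⟨wy, hwyWm, hwyr⟩ := hmax B.1 hy0v (fun h => hx0y0 h)
        obtain ⟨hwyv, hwynx0, hwymax⟩ := (Finset.mem_filter.mp hwyWm).2
        have hcross : ∀ s t : V, s ≠ v → t ≠ v → ¬ AvdReach G v s t → ¬ AvdReach G v A.1 s →
            (∀ w ∈ Wm, G.dist s w = G.dist t w) → False := by
          intro s t hsv htv hst hxs heqst
          obtain ⟨w, hwWm, hwr⟩ := hmax s hsv hxs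
          obtain ⟨hwv, hwnx0, hwmax⟩ := (Finset.mem_filter.mp hwWm).2
          have hle : G.dist s v ≤ G.dist w v := hwmax s hwr.symm
          have h1 : G.dist s w = G.dist w v - G.dist s v := L2 s w hwr hle
          have hntw : ¬ AvdReach G v t w := fun h => hst (hwr.trans h.symm)
          have h2 : G.dist t w = G.dist t v + G.dist v w := dist_add_of_not_avdReach hconn hntw
          have h3 := heqst w hwWm
          have h4 : G.dist v w = G.dist w v := SimpleGraph.dist_comm
          have h5 : 1 ≤ G.dist t v := dpos _ _ htv
          have h6 : 1 ≤ G.dist s v := dpos _ _ hsv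
          omega
        have hvcase : ∀ s : V, s ≠ v → (∀ w ∈ Wm, G.dist v w = G.dist s w) → False := by
          intro s hsv heqs
          have h3 := heqs wy hwyWm
          have h4 : G.dist v wy = G.dist wy v := SimpleGraph.dist_comm
          have h6 : 1 ≤ G.dist s v := dpos _ _ hsv
          by_cases hsw : AvdReach G v s wy
          · have hle : G.dist s v ≤ G.dist wy v := hwymax s hsw.symm
            have h1 := L2 s wy hsw hle
            omega
          · have h2 := dist_add_of_not_avdReach hconn hsw
            omega
        by_cases hpv : p = v
        · subst hpv
          exact hvcase q (fun h => hne (h ▸ rfl)) heq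
        · by_cases hqv : q = v
          · subst hqv
            exact hvcase p hpv (fun w hw => (heq w hw).symm)
          · by_cases hpq : AvdReach G v p q
            · have hlvlne : G.dist p v ≠ G.dist q v := fun h => hne (hInj p q hpq h)
              have h3 := heq wy hwyWm
              by_cases hpwy : AvdReach G v p wy
              · have hqwy : AvdReach G v q wy := hpq.symm.trans hpwy
                have hle1 : G.dist p v ≤ G.dist wy v := hwymax p hpwy.symm
                have hle2 : G.dist q v ≤ G.dist wy v := hwymax q hqwy.symm
                have h1 := L2 p wy hpwy hle1
                have h2 := L2 q wy hqwy hle2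
                omega
              · have hqwy : ¬ AvdReach G v q wy := fun h => hpwy (hpq.trans h)
                have h1 := dist_add_of_not_avdReach hconn hpwy
                have h2 := dist_add_of_not_avdReach hconn hqwy
                omega
            · by_cases hxp : AvdReach G v A.1 p
              · have hxq : ¬ AvdReach G v A.1 q := fun h => hpq (hxp.symm.trans h)
                exact hcross q p hqv hpv (fun h => hpq h.symm) hxq
                  (fun w hw => (heq w hw).symm)
              · exact hcross p q hpv hqv hpq hxp heq
      have hfinal := hsInf_le Wm hWres
      rw [hdim] at hfinal
      omega
end

section
/- If G is a connected graph with resolving number res(G) = k, then any two distinct vertices of G have at most k−1 common neighbors. -/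
open SimpleGraph Finset

variable {V : Type*}

theorem stmt5 [Fintype V] [DecidableEq V] (G : SimpleGraph V) [DecidableRel G.Adj]
    (hG : G.Connected) (k : ℕ) (hres : G.resolvingNumber = k) :
    ∀ u v : V, u ≠ v → (G.neighborFinset u ∩ G.neighborFinset v).card ≤ k - 1 := by
  intro u v huv
  by_contra h
  push_neg at h
  have hk : k ∈ {k | ∀ W : Finset V, W.card = k → G.IsResolvingSet W} := by
    rw [← hres, SimpleGraph.resolvingNumber]
    apply Nat.sInf_mem
    refine ⟨Fintype.card V + 1, fun W hW => ?_⟩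
    exact absurd hW (by have := W.card_le_univ; omega)
  have hcard : k ≤ (G.neighborFinset u ∩ G.neighborFinset v).card := by omega
  obtain ⟨W, hWsub, hWcard⟩ := Finset.exists_subset_card_eq hcard
  have := hk W hWcard u v (fun w hw => by
    have hw' := hWsub hw
    simp only [Finset.mem_inter, SimpleGraph.mem_neighborFinset] at hw'
    rw [(SimpleGraph.dist_eq_one_iff_adj).2 hw'.1, (SimpleGraph.dist_eq_one_iff_adj).2 hw'.2])
  exact huv this
end

section
/- If G is a randomly k-dimensional graph of order n, then every pair {x,y} of distinct vertices of G is resolved by at least n−k+1 vertices of G, i.e. |{v ∈ V(G) : d(v,x) ≠ d(v,y)}| ≥ n−k+1. -/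
open SimpleGraph Finset

variable {V : Type*}

theorem stmt6 [Fintype V] [DecidableEq V] (G : SimpleGraph V) (k : ℕ)
    (hG : G.RandomlyKDim k) :
    ∀ x y : V, x ≠ y →
      Fintype.card V - k + 1 ≤
        (Finset.univ.filter (fun w : V => G.dist w x ≠ G.dist w y)).card := by
  intro x y hxy
  obtain ⟨hconn, hdim, hres⟩ := hG
  -- k ≤ |V|
  have hk_le : k ≤ Fintype.card V := by
    rw [← hdim, SimpleGraph.metricDim]
    apply Nat.sInf_le
    refine ⟨Finset.univ, Finset.card_univ, ?_⟩
    intro u v h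
    have := h v (Finset.mem_univ v)
    rw [SimpleGraph.dist_self] at this
    exact (hconn.dist_eq_zero_iff).mp this
  -- k ≥ 1
  have hk_pos : 1 ≤ k := by
    by_contra h
    have hk0 : k = 0 := by omega
    have := hres ∅ (by simp [hk0]) x y (by simp)
    exact hxy this
  set S := Finset.univ.filter (fun w : V => G.dist w x = G.dist w y) with hS
  have hm : S.card < k := by
    by_contra h
    push_neg at h
    obtain ⟨W, hWS, hWcard⟩ := Finset.exists_subset_card_eq h
    have := hres W hWcard x y (fun w hw => by
      have hwS := hWS hw
      rw [hS, Finset.mem_filter] at hwS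
      rw [SimpleGraph.dist_comm, hwS.2, SimpleGraph.dist_comm])
    exact hxy this
  have hsum : S.card + (Finset.univ.filter (fun w : V => G.dist w x ≠ G.dist w y)).card
      = Fintype.card V := by
    rw [hS, ← Finset.card_univ]
    exact Finset.card_filter_add_card_filter_not _
  omega
end

section
/- If G is a randomly k-dimensional graph of order n, then every vertex v of G resolves at most C(n,2)−k+1 pairs of vertices, i.e. the number of pairs {x,y} with d(v,x) ≠ d(v,y) is at most C(n,2)−k+1. -/
open SimpleGraph Finset

variable {V : Type*}

theorem stmt7 [Fintype V] [DecidableEq V] (G : SimpleGraph V) (k : ℕ)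
    (hG : G.RandomlyKDim k) (v : V) :
    ((Finset.univ.powersetCard 2).filter
        (fun s : Finset V => ∃ x ∈ s, ∃ y ∈ s, G.dist v x ≠ G.dist v y)).card ≤
      (Fintype.card V).choose 2 - k + 1 := by
  classical
  obtain ⟨hconn, hdim, -⟩ := hG
  set p : Finset V → Prop := fun s => ∃ x ∈ s, ∃ y ∈ s, G.dist v x ≠ G.dist v y with hp
  set P := Finset.univ.powersetCard (α := V) 2 with hP
  set T := P.filter (fun s => ¬ p s) with hT
  -- choice function
  have f : ∀ s ∈ T, V := fun s _ => if h : s.Nonempty then h.choose else v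
  set fn : Finset V → V := fun s => if h : s.Nonempty then h.choose else v with hfn
  have hfmem : ∀ s : Finset V, s.Nonempty → fn s ∈ s := by
    intro s hs
    simp only [hfn, dif_pos hs]
    exact hs.choose_spec
  set W : Finset V := insert v (T.image fn) with hW
  have hWres : G.IsResolvingSet W := by
    intro u w h
    by_contra hne
    have hs2 : ({u, w} : Finset V).card = 2 := by
      rw [Finset.card_insert_of_notMem (by simpa using hne), Finset.card_singleton]
    have hsT : ({u, w} : Finset V) ∈ T := by
      rw [hT, Finset.mem_filter]
      refine ⟨Finset.mem_powersetCard.2 ⟨Finset.subset_univ _, hs2⟩, ?_⟩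
      intro ⟨x, hx, y, hy, hxy⟩
      simp only [Finset.mem_insert, Finset.mem_singleton] at hx hy
      have huv : G.dist v u = G.dist v w :=
        SimpleGraph.dist_comm.trans ((h v (Finset.mem_insert_self _ _)).trans
          SimpleGraph.dist_comm)
      rcases hx with rfl | rfl <;> rcases hy with rfl | rfl <;> simp_all
    have hne' : ({u, w} : Finset V).Nonempty := ⟨u, by simp⟩
    have hfW : fn {u, w} ∈ W := by
      rw [hW]
      exact Finset.mem_insert_of_mem (Finset.mem_image_of_mem fn hsT)
    have hfs := hfmem _ hne'
    have hdzero : ∀ a : V, G.dist u a = G.dist w a → (a = u ∨ a = w) → False := by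
      intro a ha hcase
      rcases hcase with rfl | rfl
      · rw [G.dist_self] at ha
        exact hne ((hconn.preconnected w a).dist_eq_zero_iff.mp ha.symm).symm
      · rw [G.dist_self] at ha
        exact hne ((hconn.preconnected u a).dist_eq_zero_iff.mp ha)
    simp only [Finset.mem_insert, Finset.mem_singleton] at hfs
    exact hdzero _ (h _ hfW) hfs
  have hk : k ≤ W.card := by
    rw [← hdim, SimpleGraph.metricDim]
    exact csInf_le (OrderBot.bddBelow _) ⟨W, rfl, hWres⟩
  have hWcard : W.card ≤ T.card + 1 := by
    calc W.card ≤ (T.image fn).card + 1 := by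
          rw [hW]; exact Finset.card_insert_le _ _
      _ ≤ T.card + 1 := by
          exact Nat.add_le_add_right (Finset.card_image_le) 1
  have hsplit : (P.filter p).card + T.card = P.card := by
    rw [hT]
    exact Finset.card_filter_add_card_filter_not (p := p)
  have hPcard : P.card = (Fintype.card V).choose 2 := by
    rw [hP, Finset.card_powersetCard, Finset.card_univ]
  have hgoal : ((Finset.univ.powersetCard 2).filter
        (fun s : Finset V => ∃ x ∈ s, ∃ y ∈ s, G.dist v x ≠ G.dist v y)).card
      = (P.filter p).card := by
    congr 1
  rw [hgoal]
  omega
end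

section
/- Let n, p₁, p₂, q₁, q₂, r₁, r₂ be positive integers with n = p_i·q_i + r_i and r_i < p_i for i = 1,2. If p₁ < p₂, then (p₁−r₁)·C(q₁,2) + r₁·C(q₁+1,2) ≥ (p₂−r₂)·C(q₂,2) + r₂·C(q₂+1,2). -/
open SimpleGraph Finset

variable {V : Type*}

lemma two_mul_choose_two (q : ℕ) : 2 * q.choose 2 = q * (q - 1) := by
  induction q with
  | zero => rfl
  | succ k ih =>
    rw [Nat.choose_succ_succ, Nat.choose_one_right, Nat.succ_sub_one]
    cases k with
    | zero => rfl
    | succ m =>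
      rw [Nat.succ_sub_one] at ih
      nlinarith [ih]

theorem stmt10 (n p₁ p₂ q₁ q₂ r₁ r₂ : ℕ)
    (hn : 0 < n) (hp₁ : 0 < p₁) (hp₂ : 0 < p₂) (hq₁ : 0 < q₁) (hq₂ : 0 < q₂)
    (hr₁pos : 0 < r₁) (hr₂pos : 0 < r₂)
    (h1 : n = p₁ * q₁ + r₁) (h2 : n = p₂ * q₂ + r₂)
    (hr₁ : r₁ < p₁) (hr₂ : r₂ < p₂) (hp : p₁ < p₂) :
    (p₂ - r₂) * q₂.choose 2 + r₂ * (q₂ + 1).choose 2 ≤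
      (p₁ - r₁) * q₁.choose 2 + r₁ * (q₁ + 1).choose 2 := by
  have key : (n : ℤ) * (q₂ - 1) + r₂ * (q₂ + 1) ≤ (n : ℤ) * (q₁ - 1) + r₁ * (q₁ + 1) := by
    rcases lt_trichotomy q₁ q₂ with h | h | h
    · exfalso
      have h3 : (p₁ + 1) * (q₁ + 1) ≤ p₂ * q₂ := Nat.mul_le_mul hp h
      have h4 : (p₁ + 1) * (q₁ + 1) = p₁ * q₁ + p₁ + q₁ + 1 := by ring
      omega
    · subst h
      have hr : r₂ ≤ r₁ := by nlinarith [h1, h2]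
      have : (r₂ : ℤ) ≤ r₁ := by exact_mod_cast hr
      nlinarith [this, hq₁]
    · have h3 : r₂ * (q₂ + 1) + q₂ ≤ n := by nlinarith [hr₂, h2]
      have h3' : (r₂ : ℤ) * (q₂ + 1) + q₂ ≤ n := by exact_mod_cast h3
      have h4 : (q₂ : ℤ) + 1 ≤ q₁ := by exact_mod_cast h
      nlinarith [h3', h4, hn, hr₁pos, hq₁]
  refine Nat.le_of_mul_le_mul_left ?_ (show 0 < 2 by norm_num)
  have c1 : (2 : ℤ) * q₁.choose 2 = q₁ * (q₁ - 1) := by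
    have := two_mul_choose_two q₁; zify [hq₁] at this; linarith
  have c2 : (2 : ℤ) * q₂.choose 2 = q₂ * (q₂ - 1) := by
    have := two_mul_choose_two q₂; zify [hq₂] at this; linarith
  have c3 : (2 : ℤ) * (q₁ + 1).choose 2 = (q₁ + 1) * q₁ := by
    have := two_mul_choose_two (q₁ + 1); zify at this; push_cast at this ⊢; linarith
  have c4 : (2 : ℤ) * (q₂ + 1).choose 2 = (q₂ + 1) * q₂ := by
    have := two_mul_choose_two (q₂ + 1); zify at this; push_cast at this ⊢; linarith
  have e1 : (n : ℤ) = p₁ * q₁ + r₁ := by exact_mod_cast h1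
  have e2 : (n : ℤ) = p₂ * q₂ + r₂ := by exact_mod_cast h2
  zify [hr₁.le, hr₂.le]
  have expand1 : (2 : ℤ) * (((p₁ : ℤ) - r₁) * q₁.choose 2 + r₁ * (q₁ + 1).choose 2)
      = (n : ℤ) * (q₁ - 1) + r₁ * (q₁ + 1) := by
    linear_combination ((p₁ : ℤ) - r₁) * c1 + (r₁ : ℤ) * c3 - ((q₁ : ℤ) - 1) * e1
  have expand2 : (2 : ℤ) * (((p₂ : ℤ) - r₂) * q₂.choose 2 + r₂ * (q₂ + 1).choose 2)
      = (n : ℤ) * (q₂ - 1) + r₂ * (q₂ + 1) := by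
    linear_combination ((p₂ : ℤ) - r₂) * c2 + (r₂ : ℤ) * c4 - ((q₂ : ℤ) - 1) * e2
  linarith [key, expand1, expand2]
end

section
/- If G is a randomly k-dimensional graph of order n with diameter d, then k ≥ (n−1)/d. -/
open SimpleGraph Finset

variable {V : Type*}

theorem stmt11 [Fintype V] (G : SimpleGraph V) (k : ℕ)
    (hG : G.RandomlyKDim k) :
    ((Fintype.card V : ℚ) - 1) / (G.diam : ℚ) ≤ (k : ℚ) := by
  classical
  obtain ⟨hconn, -, hres⟩ := hG
  set n := Fintype.card V with hn
  set d := G.diam with hd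
  rcases Nat.eq_zero_or_pos d with hd0 | hd1
  · rw [hd0]; norm_num
  rcases le_or_gt n 1 with hn1 | hn2
  · have hnum : ((n : ℚ) - 1) ≤ 0 := by
      have : (n : ℚ) ≤ 1 := by exact_mod_cast hn1
      linarith
    have hle : ((n : ℚ) - 1) / (d : ℚ) ≤ 0 :=
      div_nonpos_of_nonpos_of_nonneg hnum (by positivity)
    calc ((n : ℚ) - 1) / (d : ℚ) ≤ 0 := hle
      _ ≤ (k : ℚ) := by positivity
  -- Main case : n ≥ 2 and d ≥ 1.
  have hne : G.ediam ≠ ⊤ := G.ediam_ne_top_of_diam_ne_zero (by omega)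
  -- For any distinct u v, fewer than k vertices are equidistant from u and v,
  -- since any k vertices form a resolving set.
  have hpair : ∀ u v : V, u ≠ v →
      (univ.filter fun w => G.dist u w = G.dist v w).card + 1 ≤ k := by
    intro u v huv
    by_contra hcon
    have hk : k ≤ (univ.filter fun w => G.dist u w = G.dist v w).card := by omega
    obtain ⟨W, hWsub, hWcard⟩ := Finset.exists_subset_card_eq hk
    exact huv (hres W hWcard u v fun w hw => (Finset.mem_filter.mp (hWsub hw)).2)
  have hk1 : 1 ≤ k := by
    obtain ⟨u, v, huv⟩ := Fintype.exists_pair_of_one_lt_card hn2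
    have := hpair u v huv; omega
  obtain ⟨k', rfl⟩ : ∃ k', k = k' + 1 := ⟨k - 1, by omega⟩
  set k := k' + 1 with hk_def
  -- Per-vertex Cauchy-Schwarz inequality on distance classes.
  have hw_ineq : ∀ w : V, (n - 1) ^ 2 ≤
      d * ∑ u ∈ univ.erase w, (univ.filter fun v => G.dist v w = G.dist u w).card := by
    intro w
    have hscard : (univ.erase w).card = n - 1 := by
      rw [Finset.card_erase_of_mem (Finset.mem_univ w), Finset.card_univ]
    have hmaps : ∀ v ∈ univ.erase w, G.dist v w ∈ Finset.Icc 1 d := by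
      intro v hv
      rw [Finset.mem_Icc]
      exact ⟨hconn.pos_dist_of_ne (Finset.ne_of_mem_erase hv), G.dist_le_diam hne⟩
    set B := fun i => (univ.erase w).filter (fun v => G.dist v w = i) with hB_def
    have h1 : ∑ i ∈ Finset.Icc 1 d, (B i).card = n - 1 := by
      rw [← hscard]
      exact (Finset.card_eq_sum_card_fiberwise hmaps).symm
    have h2 : ∑ u ∈ univ.erase w, (B (G.dist u w)).card
        = ∑ i ∈ Finset.Icc 1 d, (B i).card ^ 2 := by
      rw [← Finset.sum_fiberwise_of_maps_to hmaps (fun u => (B (G.dist u w)).card)]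
      apply Finset.sum_congr rfl
      intro i _
      have : ∑ u ∈ (univ.erase w).filter (fun u => G.dist u w = i), (B (G.dist u w)).card
          = ∑ u ∈ (univ.erase w).filter (fun u => G.dist u w = i), (B i).card := by
        apply Finset.sum_congr rfl
        intro u hu
        rw [(Finset.mem_filter.mp hu).2]
      rw [this, Finset.sum_const, smul_eq_mul, sq]
    have hCS : (n - 1) ^ 2 ≤ d * ∑ i ∈ Finset.Icc 1 d, (B i).card ^ 2 := by
      have h := sq_sum_le_card_mul_sum_sq (s := Finset.Icc 1 d)
        (f := fun i => ((B i).card : ℚ))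
      have hsum : ∑ i ∈ Finset.Icc 1 d, ((B i).card : ℚ) = ((n - 1 : ℕ) : ℚ) := by
        rw [← Nat.cast_sum, h1]
      have hIcard : (Finset.Icc 1 d).card = d := by rw [Nat.card_Icc]; omega
      rw [hsum, hIcard] at h
      exact_mod_cast h
    have h3 : ∑ u ∈ univ.erase w, (univ.filter fun v => G.dist v w = G.dist u w).card
        = ∑ u ∈ univ.erase w, (B (G.dist u w)).card := by
      apply Finset.sum_congr rfl
      intro u hu
      congr 1
      ext v
      constructor
      · intro hv
        have hdv : G.dist v w = G.dist u w := (Finset.mem_filter.mp hv).2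
        have hpos : 0 < G.dist u w := hconn.pos_dist_of_ne (Finset.ne_of_mem_erase hu)
        have hvw : v ≠ w := by
          intro hvw
          rw [hvw, SimpleGraph.dist_self] at hdv
          omega
        exact Finset.mem_filter.mpr
          ⟨Finset.mem_erase.mpr ⟨hvw, Finset.mem_univ v⟩, hdv⟩
      · intro hv
        exact Finset.mem_filter.mpr ⟨Finset.mem_univ v, (Finset.mem_filter.mp hv).2⟩
    rw [h3, h2]
    exact hCS
  -- The triple-counting sum.
  set T := ∑ w ∈ univ, ∑ u ∈ univ, ∑ v ∈ univ,
      (if u ≠ w ∧ G.dist v w = G.dist u w then 1 else 0) with hT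
  have hinner : ∀ w : V, ∑ u ∈ univ, ∑ v ∈ univ,
      (if u ≠ w ∧ G.dist v w = G.dist u w then 1 else 0)
      = ∑ u ∈ univ.erase w, (univ.filter fun v => G.dist v w = G.dist u w).card := by
    intro w
    have hstep : ∀ u : V, ∑ v ∈ univ, (if u ≠ w ∧ G.dist v w = G.dist u w then 1 else 0)
        = if u ≠ w then (univ.filter fun v => G.dist v w = G.dist u w).card else 0 := by
      intro u
      by_cases hu : u = w
      · simp [hu]
      · simp only [if_pos hu, Finset.card_filter]
        apply Finset.sum_congr rfl
        intro v _
        simp [hu]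
    rw [Finset.sum_congr rfl (fun u _ => hstep u)]
    rw [← Finset.sum_filter, Finset.filter_ne' univ w]
  have hT_lower : n * (n - 1) ^ 2 ≤ d * T := by
    calc n * (n - 1) ^ 2 = ∑ _w ∈ (univ : Finset V), (n - 1) ^ 2 := by
          rw [Finset.sum_const, Finset.card_univ, smul_eq_mul]
      _ ≤ ∑ w ∈ univ, d * ∑ u ∈ univ, ∑ v ∈ univ,
            (if u ≠ w ∧ G.dist v w = G.dist u w then 1 else 0) := by
          apply Finset.sum_le_sum
          intro w _
          rw [hinner w]
          exact hw_ineq w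
      _ = d * T := by rw [hT, Finset.mul_sum]
  have hT_upper : T ≤ n * ((n - 1) * k) := by
    have hswap : T = ∑ u ∈ univ, ∑ v ∈ univ, ∑ w ∈ univ,
        (if u ≠ w ∧ G.dist v w = G.dist u w then 1 else 0) := by
      rw [hT, Finset.sum_comm]
      exact Finset.sum_congr rfl (fun u _ => Finset.sum_comm)
    rw [hswap]
    have hrow : ∀ u : V, ∑ v ∈ univ, ∑ w ∈ univ,
        (if u ≠ w ∧ G.dist v w = G.dist u w then 1 else 0) ≤ (n - 1) * k := by
      intro u
      have hdiag : ∑ w ∈ univ, (if u ≠ w ∧ G.dist u w = G.dist u w then 1 else 0)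
          ≤ n - 1 := by
        calc ∑ w ∈ univ, (if u ≠ w ∧ G.dist u w = G.dist u w then 1 else 0)
            = (univ.filter fun w => u ≠ w ∧ G.dist u w = G.dist u w).card :=
              (Finset.card_filter _ _).symm
          _ ≤ (univ.erase u).card := by
              apply Finset.card_le_card
              intro w hw
              exact Finset.mem_erase.mpr
                ⟨Ne.symm (Finset.mem_filter.mp hw).2.1, Finset.mem_univ w⟩
          _ = n - 1 := by
              rw [Finset.card_erase_of_mem (Finset.mem_univ u), Finset.card_univ]
      have hoff : ∀ v ∈ univ.erase u, ∑ w ∈ univ,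
          (if u ≠ w ∧ G.dist v w = G.dist u w then 1 else 0) ≤ k - 1 := by
        intro v hv
        have hvu : v ≠ u := Finset.ne_of_mem_erase hv
        have hp := hpair u v (Ne.symm hvu)
        calc ∑ w ∈ univ, (if u ≠ w ∧ G.dist v w = G.dist u w then 1 else 0)
            ≤ ∑ w ∈ univ, (if G.dist u w = G.dist v w then 1 else 0) := by
              apply Finset.sum_le_sum
              intro w _
              by_cases h1 : u ≠ w ∧ G.dist v w = G.dist u w
              · rw [if_pos h1, if_pos h1.2.symm]
              · rw [if_neg h1]; exact Nat.zero_le _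
          _ = (univ.filter fun w => G.dist u w = G.dist v w).card :=
              (Finset.card_filter _ _).symm
          _ ≤ k - 1 := by omega
      calc ∑ v ∈ univ, ∑ w ∈ univ, (if u ≠ w ∧ G.dist v w = G.dist u w then 1 else 0)
          = (∑ w ∈ univ, (if u ≠ w ∧ G.dist u w = G.dist u w then 1 else 0))
            + ∑ v ∈ univ.erase u, ∑ w ∈ univ,
              (if u ≠ w ∧ G.dist v w = G.dist u w then 1 else 0) :=
            (Finset.add_sum_erase univ _ (Finset.mem_univ u)).symm
        _ ≤ (n - 1) + (n - 1) * (k - 1) := by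
            apply Nat.add_le_add hdiag
            calc ∑ v ∈ univ.erase u, ∑ w ∈ univ,
                (if u ≠ w ∧ G.dist v w = G.dist u w then 1 else 0)
                ≤ ∑ _v ∈ univ.erase u, (k - 1) := Finset.sum_le_sum hoff
              _ = (n - 1) * (k - 1) := by
                  rw [Finset.sum_const, smul_eq_mul,
                    Finset.card_erase_of_mem (Finset.mem_univ u), Finset.card_univ]
        _ ≤ (n - 1) * k := by
            have h2 : k - 1 = k' := by omega
            rw [h2, hk_def, Nat.mul_succ]
            exact le_of_eq (add_comm _ _)
    calc ∑ u ∈ univ, ∑ v ∈ univ, ∑ w ∈ univ,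
        (if u ≠ w ∧ G.dist v w = G.dist u w then 1 else 0)
        ≤ ∑ _u ∈ (univ : Finset V), (n - 1) * k :=
          Finset.sum_le_sum (fun u _ => hrow u)
      _ = n * ((n - 1) * k) := by
          rw [Finset.sum_const, Finset.card_univ, smul_eq_mul]
  have key : n * (n - 1) ^ 2 ≤ d * (n * ((n - 1) * k)) :=
    le_trans hT_lower (Nat.mul_le_mul_left d hT_upper)
  -- Conclude over ℚ.
  have h1n : 1 ≤ n := by omega
  rw [div_le_iff₀ (by exact_mod_cast hd1 : (0 : ℚ) < (d : ℚ))]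
  have hcast := (Nat.cast_le (α := ℚ)).mpr key
  push_cast [Nat.cast_sub h1n] at hcast
  rw [hk_def] at hcast
  push_cast at hcast
  rw [hk_def]
  push_cast
  have hnq : (2 : ℚ) ≤ (n : ℚ) := by exact_mod_cast hn2
  nlinarith [hcast, hnq, mul_pos (show (0 : ℚ) < (n : ℚ) by linarith)
    (show (0 : ℚ) < (n : ℚ) - 1 by linarith)]
end

section
/- If G is a randomly k-dimensional graph of order n, then k ≤ 3 or k ≥ n−1. -/
open SimpleGraph Finset

variable {V : Type*}

private lemma aux_choose_mono (n : ℕ) : ∀ b a : ℕ, a ≤ b → b ≤ n / 2 →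
    Nat.choose n a ≤ Nat.choose n b := by
  intro b
  induction b with
  | zero => intro a ha _; simp [Nat.le_zero.mp ha]
  | succ b ih =>
    intro a ha hb
    rcases eq_or_lt_of_le ha with h | h
    · rw [h]
    · exact (ih a (Nat.lt_succ_iff.mp h) (le_trans (Nat.le_succ b) hb)).trans
        (Nat.choose_le_succ_of_lt_half_left (Nat.lt_of_succ_le hb))

private lemma aux_choose_lt (n j : ℕ) (h3 : 3 ≤ j) (hj : j + 3 ≤ n) :
    Nat.choose n 2 < Nat.choose n j := by
  have hn6 : 6 ≤ n := le_trans (by omega) hj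
  have h23 : Nat.choose n 2 < Nat.choose n 3 := by
    have h1 : Nat.choose n 3 * 3 = Nat.choose n 2 * (n - 2) := by
      have := Nat.choose_succ_right_eq n 2
      simpa using this
    have hpos : 0 < Nat.choose n 2 := Nat.choose_pos (by omega)
    have : Nat.choose n 2 * 3 < Nat.choose n 3 * 3 := by
      rw [h1]
      exact Nat.mul_lt_mul_of_pos_left (by omega) hpos
    exact Nat.lt_of_mul_lt_mul_right this
  rcases le_or_gt j (n / 2) with hhalf | hhalf
  · exact lt_of_lt_of_le h23 (aux_choose_mono n j 3 h3 hhalf)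
  · have hjn : j ≤ n := by omega
    rw [← Nat.choose_symm hjn]
    have h3' : 3 ≤ n - j := by omega
    have hhalf' : n - j ≤ n / 2 := by omega
    exact lt_of_lt_of_le h23 (aux_choose_mono n (n - j) 3 h3' hhalf')

theorem stmt12 [Fintype V] (G : SimpleGraph V) (k : ℕ)
    (hG : G.RandomlyKDim k) :
    k ≤ 3 ∨ Fintype.card V - 1 ≤ k := by
  classical
  by_contra hcon
  push_neg at hcon
  obtain ⟨h4, hn⟩ := hcon
  obtain ⟨hconn, hdim, hres⟩ := hG
  set n := Fintype.card V with hncard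
  have hk4 : 4 ≤ k := h4
  have hkn : k + 2 ≤ n := by omega
  -- the non-distinguishing set of a pair
  set N : V → V → Finset V := fun u v =>
    Finset.filter (fun w => G.dist u w = G.dist v w) Finset.univ with hN
  -- Step A: every pair has at most k-1 non-distinguishing vertices
  have hsmall : ∀ u v : V, u ≠ v → (N u v).card ≤ k - 1 := by
    intro u v huv
    by_contra hbig
    push_neg at hbig
    have hge : k ≤ (N u v).card := by omega
    obtain ⟨W, hWsub, hWcard⟩ := Finset.exists_subset_card_eq hge
    have := hres W hWcard u v (fun w hw => (Finset.mem_filter.mp (hWsub hw)).2)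
    exact huv this
  -- Step B: no (k-1)-set resolves
  have hnores : ∀ S : Finset V, S.card = k - 1 → ¬ G.IsResolvingSet S := by
    intro S hS hRes
    have hmem : k - 1 ∈ {m | ∃ W : Finset V, W.card = m ∧ G.IsResolvingSet W} :=
      ⟨S, hS, hRes⟩
    have := Nat.sInf_le hmem
    rw [SimpleGraph.metricDim] at hdim
    omega
  -- Step C: every (k-1)-set is exactly the non-distinguishing set of some pair
  have key : ∀ S : Finset V, S.card = k - 1 →
      ∃ p : V × V, p.1 ≠ p.2 ∧ S = N p.1 p.2 := by
    intro S hS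
    have h := hnores S hS
    rw [SimpleGraph.IsResolvingSet] at h
    push_neg at h
    obtain ⟨u, v, hd, huv⟩ := h
    refine ⟨(u, v), huv, ?_⟩
    have hsub : S ⊆ N u v := by
      intro w hw
      exact Finset.mem_filter.mpr ⟨Finset.mem_univ w, hd w hw⟩
    exact Finset.eq_of_subset_of_card_le hsub (by rw [hS]; exact hsmall u v huv)
  -- N is symmetric in its arguments
  have hNsymm : ∀ u v : V, N u v = N v u := by
    intro u v
    simp only [hN]
    apply Finset.filter_congr
    intro w _
    simp [eq_comm]
  -- the injection from (k-1)-subsets to 2-subsets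
  set f : Finset V → Finset V := fun S =>
    if h : ∃ p : V × V, p.1 ≠ p.2 ∧ S = N p.1 p.2 then {h.choose.1, h.choose.2}
    else ∅ with hf
  have hcardle : (Finset.univ.powersetCard (k - 1) : Finset (Finset V)).card ≤
      (Finset.univ.powersetCard 2 : Finset (Finset V)).card := by
    apply Finset.card_le_card_of_injOn f
    · intro S hS
      rw [Finset.mem_coe, Finset.mem_powersetCard] at hS ⊢
      have hex := key S hS.2
      refine ⟨Finset.subset_univ _, ?_⟩
      simp only [hf, dif_pos hex]
      exact Finset.card_pair hex.choose_spec.1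
    · intro S hS S' hS' hfeq
      rw [Finset.mem_coe, Finset.mem_powersetCard] at hS hS'
      have hex := key S hS.2
      have hex' := key S' hS'.2
      obtain ⟨hne, hSeq⟩ := hex.choose_spec
      obtain ⟨hne', hSeq'⟩ := hex'.choose_spec
      simp only [hf, dif_pos hex, dif_pos hex'] at hfeq
      have hpair : ({hex.choose.1, hex.choose.2} : Set V) =
          {hex'.choose.1, hex'.choose.2} := by
        rw [← Finset.coe_pair, ← Finset.coe_pair, hfeq]
      rw [Set.pair_eq_pair_iff] at hpair
      rcases hpair with ⟨h1, h2⟩ | ⟨h1, h2⟩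
      · rw [hSeq, hSeq', h1, h2]
      · rw [hSeq, hSeq', h1, h2, hNsymm]
  rw [Finset.card_powersetCard, Finset.card_powersetCard, Finset.card_univ, ← hncard] at hcardle
  have := aux_choose_lt n (k - 1) (by omega) (by omega)
  omega
end

section
/- If S and T are distinct (k−1)-subsets of vertices of a randomly k-dimensional graph G, then there is no pair {x,y} of distinct vertices that is unresolved by both S and T; that is, every pair of distinct vertices of G is resolved by some vertex of S or some vertex of T whenever S ≠ T. -/
open SimpleGraph Finset

variable {V : Type*}

theorem stmt13 [Fintype V] (G : SimpleGraph V) (k : ℕ)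
    (hG : G.RandomlyKDim k) (S T : Finset V)
    (hS : S.card = k - 1) (hT : T.card = k - 1) (hST : S ≠ T) :
    ∀ x y : V, x ≠ y → ∃ w, (w ∈ S ∨ w ∈ T) ∧ G.dist w x ≠ G.dist w y := by
  classical
  intro x y hxy
  obtain ⟨-, -, hres⟩ := hG
  rcases Nat.eq_zero_or_pos k with hk | hk
  · exfalso
    apply hST
    have hS0 : S = ∅ := Finset.card_eq_zero.mp (by omega)
    have hT0 : T = ∅ := Finset.card_eq_zero.mp (by omega)
    rw [hS0, hT0]
  · -- T \ S is nonempty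
    have hTS : ¬ T ⊆ S := by
      intro hsub
      exact hST (Finset.eq_of_subset_of_card_le hsub (by omega)).symm
    obtain ⟨t, htT, htS⟩ := Finset.not_subset.mp hTS
    have hcard : (insert t S).card = k := by
      rw [Finset.card_insert_of_notMem htS, hS]; omega
    have hW := hres (insert t S) hcard
    by_contra h
    push_neg at h
    apply hxy
    apply hW x y
    intro w hw
    rcases Finset.mem_insert.mp hw with hw | hw
    · have := h w (Or.inr (hw ▸ htT))
      rw [G.dist_comm (u := x) (v := w), G.dist_comm (u := y) (v := w)]
      exact this
    · have := h w (Or.inl hw)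
      rw [G.dist_comm (u := x) (v := w), G.dist_comm (u := y) (v := w)]
      exact this
end

section
/- If G is a connected graph with resolving number res(G) = k, then the maximum degree of G satisfies Δ(G) ≤ 2^{k−1} + k − 1. -/
open SimpleGraph Finset

variable {V : Type*}

theorem stmt14 [Fintype V] (G : SimpleGraph V) [DecidableRel G.Adj]
    (hG : G.Connected) (k : ℕ) (hres : G.resolvingNumber = k) :
    G.maxDegree ≤ 2 ^ (k - 1) + k - 1 := by
  classical
  -- the defining set is nonempty: the full vertex set resolves
  have hne : {k | ∀ W : Finset V, W.card = k → G.IsResolvingSet W}.Nonempty := by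
    refine ⟨Fintype.card V, fun W hW => ?_⟩
    have hWuniv : W = Finset.univ := Finset.eq_univ_of_card _ hW
    intro u v h
    have := h v (by simp [hWuniv])
    rw [SimpleGraph.dist_self] at this
    by_contra hneq
    exact (hG.pos_dist_of_ne hneq).ne' this
  have hk : ∀ W : Finset V, W.card = k → G.IsResolvingSet W := by
    have := Nat.sInf_mem hne
    rwa [show sInf _ = k from hres] at this
  apply SimpleGraph.maxDegree_le_of_forall_degree_le
  intro v
  rcases Nat.eq_zero_or_pos k with hk0 | hkpos
  · -- k = 0 : empty set resolves, so the graph has at most one vertex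
    subst hk0
    have hres0 := hk ∅ rfl
    have : G.degree v = 0 := by
      rw [SimpleGraph.degree, Finset.card_eq_zero]
      ext u
      simp only [SimpleGraph.mem_neighborFinset, Finset.notMem_empty, iff_false]
      intro hadj
      exact hadj.ne (hres0 u v (by simp)).symm
    rw [SimpleGraph.degree] at this ⊢
    omega
  · -- k ≥ 1
    by_cases hdeg : G.degree v ≤ k - 1
    · have h1 : 1 ≤ 2 ^ (k - 1) := Nat.one_le_two_pow
      omega
    push_neg at hdeg
    have hcard : k - 1 ≤ (G.neighborFinset v).card := le_of_lt hdeg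
    obtain ⟨S, hS, hScard⟩ := Finset.exists_subset_card_eq hcard
    have hvS : v ∉ S := fun h => G.irrefl ((SimpleGraph.mem_neighborFinset _ _ _).mp (hS h))
    set W : Finset V := insert v S with hWdef
    have hWcard : W.card = k := by
      rw [Finset.card_insert_of_notMem hvS, hScard]; omega
    have hWres := hk W hWcard
    -- distances from outside-neighbors to S are 1 or 2
    have hdistS : ∀ u ∈ G.neighborFinset v \ W, ∀ w ∈ S,
        G.dist u w = 1 ∨ G.dist u w = 2 := by
      intro u hu w hw
      obtain ⟨hu1, hu2⟩ := Finset.mem_sdiff.mp hu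
      have hadj : G.Adj v u := (SimpleGraph.mem_neighborFinset _ _ _).mp hu1
      have hadjw : G.Adj v w := (SimpleGraph.mem_neighborFinset _ _ _).mp (hS hw)
      have huw : u ≠ w := fun h => hu2 (h ▸ Finset.mem_insert_of_mem hw)
      have h1 : 1 ≤ G.dist u w := hG.pos_dist_of_ne huw
      have h2 : G.dist u w ≤ 2 := by
        calc G.dist u w ≤ G.dist u v + G.dist v w := hG.dist_triangle
          _ = 2 := by
            rw [SimpleGraph.dist_eq_one_iff_adj.mpr hadj.symm,
              SimpleGraph.dist_eq_one_iff_adj.mpr hadjw]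
      omega
    -- injectivity of the fingerprint map on outside neighbors
    have hinj : Set.InjOn (fun u => S.filter (fun w => G.dist u w = 2))
        ↑(G.neighborFinset v \ W) := by
      intro u1 h1 u2 h2 heq
      simp only [Finset.coe_sdiff, Set.mem_diff, Finset.mem_coe] at h1 h2
      have h1' : u1 ∈ G.neighborFinset v \ W := Finset.mem_sdiff.mpr h1
      have h2' : u2 ∈ G.neighborFinset v \ W := Finset.mem_sdiff.mpr h2
      apply hWres
      intro w hw
      rcases Finset.mem_insert.mp hw with rfl | hwS
      · rw [SimpleGraph.dist_eq_one_iff_adj.mpr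
          ((SimpleGraph.mem_neighborFinset _ _ _).mp (Finset.mem_sdiff.mp h1').1).symm,
          SimpleGraph.dist_eq_one_iff_adj.mpr
          ((SimpleGraph.mem_neighborFinset _ _ _).mp (Finset.mem_sdiff.mp h2').1).symm]
      · have e1 := hdistS u1 h1' w hwS
        have e2 := hdistS u2 h2' w hwS
        have hiff := Finset.ext_iff.mp heq w
        simp only [Finset.mem_filter, and_iff_right hwS] at hiff
        omega
    -- counting
    have hsdiff : (G.neighborFinset v \ W).card ≤ 2 ^ (k - 1) := by
      have hmaps : ∀ u ∈ G.neighborFinset v \ W,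
          S.filter (fun w => G.dist u w = 2) ∈ S.powerset := by
        intro u _
        exact Finset.mem_powerset.mpr (Finset.filter_subset _ _)
      have := Finset.card_le_card_of_injOn _ hmaps hinj
      rwa [Finset.card_powerset, hScard] at this
    have hinter : (G.neighborFinset v ∩ W).card ≤ k - 1 := by
      have hsub : G.neighborFinset v ∩ W ⊆ S := by
        intro w hw
        obtain ⟨hw1, hw2⟩ := Finset.mem_inter.mp hw
        rcases Finset.mem_insert.mp hw2 with rfl | h
        · exact absurd ((SimpleGraph.mem_neighborFinset _ _ _).mp hw1) (G.irrefl)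
        · exact h
      exact (Finset.card_le_card hsub).trans_eq hScard
    have hsplit := Finset.card_inter_add_card_sdiff (G.neighborFinset v) W
    have hpow : 1 ≤ 2 ^ (k - 1) := Nat.one_le_two_pow
    rw [SimpleGraph.degree]
    omega
end

section
/- If G is a connected graph with resolving number res(G) = 3, then Δ(G) ≤ 5. -/
open SimpleGraph Finset

variable {V : Type*}

theorem stmt15 [Fintype V] (G : SimpleGraph V) [DecidableRel G.Adj]
    (hG : G.Connected) (hres : G.resolvingNumber = 3) :
    G.maxDegree ≤ 5 := by
  classical
  -- Every 3-subset of vertices is a resolving set.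
  have hne : {k | ∀ W : Finset V, W.card = k → G.IsResolvingSet W}.Nonempty := by
    refine ⟨Fintype.card V, fun W hW => ?_⟩
    have hWuniv : W = Finset.univ := Finset.eq_univ_of_card W hW
    intro u v h
    have h0 := h u (hWuniv ▸ Finset.mem_univ u)
    rw [SimpleGraph.dist_self] at h0
    exact ((hG.dist_eq_zero_iff).mp h0.symm).symm
  have h3 : ∀ W : Finset V, W.card = 3 → G.IsResolvingSet W := by
    have hmem := Nat.sInf_mem hne
    rwa [show sInf {k | ∀ W : Finset V, W.card = k → G.IsResolvingSet W}
        = G.resolvingNumber from rfl, hres] at hmem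
  -- It suffices to bound every degree.
  apply SimpleGraph.maxDegree_le_of_forall_degree_le
  intro v
  by_contra hdeg
  push_neg at hdeg
  have hdeg' : 6 ≤ (G.neighborFinset v).card := hdeg
  obtain ⟨s, hsub, hscard⟩ := Finset.exists_subset_card_eq hdeg'
  have hadj : ∀ x ∈ s, G.Adj v x := fun x hx =>
    (SimpleGraph.mem_neighborFinset G v x).mp (hsub hx)
  -- distances inside the closed neighbourhood
  have hdist1 : ∀ x y : V, G.Adj x y → G.dist x y = 1 := fun x y h =>
    (SimpleGraph.dist_eq_one_iff_adj).mpr h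
  have hdist2 : ∀ x y : V, G.Adj v x → G.Adj v y → x ≠ y → ¬ G.Adj x y →
      G.dist x y = 2 := by
    intro x y hx hy hxy hnadj
    have hle : G.dist x y ≤ 2 := by
      simpa using SimpleGraph.dist_le
        (SimpleGraph.Walk.cons hx.symm (SimpleGraph.Walk.cons hy SimpleGraph.Walk.nil))
    have h0 : G.dist x y ≠ 0 := fun h => hxy ((hG.dist_eq_zero_iff).mp h)
    have h1 : G.dist x y ≠ 1 := fun h => hnadj ((SimpleGraph.dist_eq_one_iff_adj).mp h)
    omega
  -- (i) no neighbour of v is adjacent to 3 vertices of s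
  have key1 : ∀ x, G.Adj v x → (s.filter (fun w => G.Adj x w)).card ≤ 2 := by
    intro x hx
    by_contra hc
    push_neg at hc
    obtain ⟨W, hWsub, hWcard⟩ := Finset.exists_subset_card_eq hc
    have : x = v := by
      refine h3 W hWcard x v (fun w hw => ?_)
      have hw' := hWsub hw
      rw [Finset.mem_filter] at hw'
      rw [hdist1 x w hw'.2, hdist1 v w (hadj w hw'.1)]
    exact hx.ne' this
  -- (ii) any two vertices of s have a common neighbour in s
  have key2 : ∀ a ∈ s, ∀ b ∈ s, a ≠ b →
      ∃ x, x ∈ s ∧ x ≠ a ∧ x ≠ b ∧ G.Adj x a ∧ G.Adj x b := by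
    intro a ha b hb hab
    by_contra hc
    push_neg at hc
    set t : Finset V := (s.erase a).erase b with ht
    have htcard : t.card = 4 := by
      rw [ht, Finset.card_erase_of_mem (Finset.mem_erase.mpr ⟨hab.symm, hb⟩),
        Finset.card_erase_of_mem ha, hscard]
    have hmem : ∀ x ∈ t, x ∈ s ∧ x ≠ a ∧ x ≠ b := by
      intro x hx
      rw [ht, Finset.mem_erase, Finset.mem_erase] at hx
      exact ⟨hx.2.2, hx.2.1, hx.1⟩
    set P : Finset (ℕ × ℕ) := {(1, 2), (2, 1), (2, 2)} with hP
    have hmaps : ∀ x ∈ t, (G.dist x a, G.dist x b) ∈ P := by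
      intro x hx
      obtain ⟨hxs, hxa, hxb⟩ := hmem x hx
      have hnboth : ¬(G.Adj x a ∧ G.Adj x b) := by
        intro ⟨h1, h2⟩
        exact (hc x hxs hxa hxb h1) h2
      by_cases h1 : G.Adj x a <;> by_cases h2 : G.Adj x b
      · exact absurd ⟨h1, h2⟩ hnboth
      · rw [hdist1 x a h1, hdist2 x b (hadj x hxs) (hadj b hb) hxb h2]
        simp [hP]
      · rw [hdist2 x a (hadj x hxs) (hadj a ha) hxa h1, hdist1 x b h2]
        simp [hP]
      · rw [hdist2 x a (hadj x hxs) (hadj a ha) hxa h1,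
          hdist2 x b (hadj x hxs) (hadj b hb) hxb h2]
        simp [hP]
    have hPcard : P.card < t.card := by
      rw [htcard]
      have : P.card ≤ 3 := by rw [hP]; decide
      omega
    obtain ⟨x, hxt, y, hyt, hxy, hpeq⟩ :=
      Finset.exists_ne_map_eq_of_card_lt_of_maps_to hPcard hmaps
    -- {v, a, b} does not resolve x, y
    have hva : v ≠ a := (hadj a ha).ne
    have hvb : v ≠ b := (hadj b hb).ne
    set W : Finset V := {v, a, b} with hW
    have hWcard : W.card = 3 := by
      rw [hW, Finset.card_insert_of_notMem (by simp [hva, hvb]),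
        Finset.card_insert_of_notMem (by simp [hab]), Finset.card_singleton]
    have hxeqy : x = y := by
      refine h3 W hWcard x y (fun w hw => ?_)
      rw [hW] at hw
      simp only [Finset.mem_insert, Finset.mem_singleton] at hw
      have hpx := Prod.mk.injEq .. ▸ hpeq
      have h1 : G.dist x a = G.dist y a := (Prod.ext_iff.mp hpeq).1
      have h2 : G.dist x b = G.dist y b := (Prod.ext_iff.mp hpeq).2
      rcases hw with rfl | rfl | rfl
      · rw [hdist1 x w (hadj x (hmem x hxt).1).symm,
          hdist1 y w (hadj y (hmem y hyt).1).symm]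
      · exact h1
      · exact h2
    exact hxy hxeqy
  -- Combine: pigeonhole
  have hsne : s.Nonempty := by rw [← Finset.card_pos, hscard]; omega
  obtain ⟨a, ha⟩ := hsne
  have hch : ∀ b ∈ s.erase a, ∃ x, x ∈ s ∧ x ≠ a ∧ x ≠ b ∧ G.Adj x a ∧ G.Adj x b := by
    intro b hb
    rw [Finset.mem_erase] at hb
    exact key2 a ha b hb.2 (Ne.symm hb.1)
  choose! f hf1 hf2 hf3 hf4 hf5 using hch
  set T : Finset V := s.filter (fun w => G.Adj a w) with hT
  have hmapsT : ∀ b ∈ s.erase a, f b ∈ T := by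
    intro b hb
    rw [hT, Finset.mem_filter]
    exact ⟨hf1 b hb, (hf4 b hb).symm⟩
  have hTcard : T.card * 2 < (s.erase a).card := by
    have h1 : T.card ≤ 2 := key1 a (hadj a ha)
    have h2 : (s.erase a).card = 5 := by
      rw [Finset.card_erase_of_mem ha, hscard]
    omega
  obtain ⟨x, hxT, hfib⟩ :=
    Finset.exists_lt_card_fiber_of_mul_lt_card_of_maps_to hmapsT hTcard
  have hxs : x ∈ s := (Finset.mem_filter.mp hxT).1
  have hsubfib : (s.erase a).filter (fun b => f b = x) ⊆ s.filter (fun w => G.Adj x w) := by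
    intro b hb
    rw [Finset.mem_filter] at hb ⊢
    refine ⟨(Finset.mem_erase.mp hb.1).2, ?_⟩
    have := hf5 b hb.1
    rwa [hb.2] at this
  have hcontra : 2 < (s.filter (fun w => G.Adj x w)).card :=
    lt_of_lt_of_le hfib (Finset.card_le_card hsubfib)
  exact absurd (key1 x (hadj x hxs)) (by omega)
end

section
/- If G is a connected graph with res(G) = 3 and v is a vertex of degree 5, then the subgraph induced by N(v) is a 5-cycle. -/
open SimpleGraph Finset

variable {V : Type*}

-- Auxiliary machinery for the main theorem

def eIdx : Fin 5 → Fin 5 → Fin 10 :=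
  fun i j => ![![0,0,1,2,3],![0,0,4,5,6],![1,4,0,7,8],![2,5,7,0,9],![3,6,8,9,0]] i j

def adjOf (f : Fin 10 → Bool) (i j : Fin 5) : Bool := (i != j) && f (eIdx i j)

def cAdj (i j : Fin 5) : Bool := ((i.val + 1) % 5 == j.val) || ((j.val + 1) % 5 == i.val)

def qList : List (Fin 5 × Fin 5 × Fin 5 × Fin 5) := [(0,1,2,3), (0,1,2,4), (0,1,3,4), (0,2,1,3), (0,2,1,4), (0,2,3,4), (0,3,1,2), (0,3,1,4), (0,3,2,4), (0,4,1,2), (0,4,1,3), (0,4,2,3), (1,2,0,3), (1,2,0,4), (1,2,3,4), (1,3,0,2), (1,3,0,4), (1,3,2,4), (1,4,0,2), (1,4,0,3), (1,4,2,3), (2,3,0,1), (2,3,0,4), (2,3,1,4), (2,4,0,1), (2,4,0,3), (2,4,1,3), (3,4,0,1), (3,4,0,2), (3,4,1,2)]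

def pb (f : Fin 10 → Bool) : Bool :=
  qList.all fun q =>
    !((adjOf f q.1 q.2.2.1 == adjOf f q.2.1 q.2.2.1) &&
      (adjOf f q.1 q.2.2.2 == adjOf f q.2.1 q.2.2.2))

def perms : List (Fin 5 → Fin 5) := [![0,1,2,3,4], ![0,1,2,4,3], ![0,1,3,2,4], ![0,1,3,4,2], ![0,1,4,2,3], ![0,1,4,3,2], ![0,2,1,3,4], ![0,2,1,4,3], ![0,2,3,1,4], ![0,2,3,4,1], ![0,2,4,1,3], ![0,2,4,3,1], ![0,3,1,2,4], ![0,3,1,4,2], ![0,3,2,1,4], ![0,3,2,4,1], ![0,3,4,1,2], ![0,3,4,2,1], ![0,4,1,2,3], ![0,4,1,3,2], ![0,4,2,1,3], ![0,4,2,3,1], ![0,4,3,1,2], ![0,4,3,2,1], ![1,0,2,3,4], ![1,0,2,4,3], ![1,0,3,2,4], ![1,0,3,4,2], ![1,0,4,2,3], ![1,0,4,3,2], ![1,2,0,3,4], ![1,2,0,4,3], ![1,2,3,0,4], ![1,2,3,4,0], ![1,2,4,0,3], ![1,2,4,3,0], ![1,3,0,2,4], ![1,3,0,4,2], ![1,3,2,0,4],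 ![1,3,2,4,0], ![1,3,4,0,2], ![1,3,4,2,0], ![1,4,0,2,3], ![1,4,0,3,2], ![1,4,2,0,3], ![1,4,2,3,0], ![1,4,3,0,2], ![1,4,3,2,0], ![2,0,1,3,4], ![2,0,1,4,3], ![2,0,3,1,4], ![2,0,3,4,1], ![2,0,4,1,3], ![2,0,4,3,1], ![2,1,0,3,4], ![2,1,0,4,3], ![2,1,3,0,4], ![2,1,3,4,0], ![2,1,4,0,3], ![2,1,4,3,0], ![2,3,0,1,4], ![2,3,0,4,1], ![2,3,1,0,4], ![2,3,1,4,0], ![2,3,4,0,1], ![2,3,4,1,0], ![2,4,0,1,3], ![2,4,0,3,1], ![2,4,1,0,3], ![2,4,1,3,0], ![2,4,3,0,1], ![2,4,3,1,0], ![3,0,1,2,4], ![3,0,1,4,2], ![3,0,2,1,4], ![3,0,2,4,1], ![3,0,4,1,2], ![3,0,4,2,1], ![3,1,0,2,4], ![3,1,0,4,2], ![3,1,2,0,4], ![3,1,2,4,0], ![3,1,4,0,2], ![3,1,4,2,0], ![3,2,0,1,4], ![3,2,0,4,1], ![3,2,1,0,4], ![3,2,1,4,0], ![3,2,4,0,1],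 ![3,2,4,1,0], ![3,4,0,1,2], ![3,4,0,2,1], ![3,4,1,0,2], ![3,4,1,2,0], ![3,4,2,0,1], ![3,4,2,1,0], ![4,0,1,2,3], ![4,0,1,3,2], ![4,0,2,1,3], ![4,0,2,3,1], ![4,0,3,1,2], ![4,0,3,2,1], ![4,1,0,2,3], ![4,1,0,3,2], ![4,1,2,0,3], ![4,1,2,3,0], ![4,1,3,0,2], ![4,1,3,2,0], ![4,2,0,1,3], ![4,2,0,3,1], ![4,2,1,0,3], ![4,2,1,3,0], ![4,2,3,0,1], ![4,2,3,1,0], ![4,3,0,1,2], ![4,3,0,2,1], ![4,3,1,0,2], ![4,3,1,2,0], ![4,3,2,0,1], ![4,3,2,1,0]]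

set_option maxRecDepth 10000 in
set_option maxHeartbeats 10000000 in
theorem key : ∀ b0 b1 b2 b3 b4 b5 b6 b7 b8 b9 : Bool,
    pb ![b0,b1,b2,b3,b4,b5,b6,b7,b8,b9] = true → ∃ σ ∈ perms,
    ((List.finRange 5).all
      (fun i => (List.finRange 5).all fun j =>
        ((i == j) == (σ i == σ j)) &&
        (adjOf ![b0,b1,b2,b3,b4,b5,b6,b7,b8,b9] (σ i) (σ j) == cAdj i j))) = true := by
  decide

theorem cAdj_iff (i j : Fin 5) : cAdj i j = true ↔ (cycleGraph 5).Adj i j := by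
  revert i j; decide

theorem stmt16 [Fintype V] (G : SimpleGraph V) [DecidableRel G.Adj]
    (hG : G.Connected) (hres : G.resolvingNumber = 3) (v : V)
    (hv : G.degree v = 5) :
    Nonempty ((G.induce (G.neighborSet v)) ≃g cycleGraph 5) := by
  classical
  -- every 3-subset resolves
  have hne : {k | ∀ W : Finset V, W.card = k → G.IsResolvingSet W}.Nonempty := by
    refine ⟨Fintype.card V + 1, fun W hW => absurd hW ?_⟩
    have h1 : W.card ≤ Fintype.card V := by
      simpa using Finset.card_le_univ W
    omega
  have h3 : ∀ W : Finset V, W.card = 3 → G.IsResolvingSet W := by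
    have h := Nat.sInf_mem hne
    rwa [show sInf {k | ∀ W : Finset V, W.card = k → G.IsResolvingSet W}
      = G.resolvingNumber from rfl, hres] at h
  -- distances between neighbors of v
  have hdist : ∀ a b : V, a ∈ G.neighborSet v → b ∈ G.neighborSet v → a ≠ b →
      G.dist a b = if G.Adj a b then 1 else 2 := by
    intro a b ha hb hab
    by_cases h : G.Adj a b
    · simp [h, SimpleGraph.dist_eq_one_iff_adj.mpr h]
    · rw [if_neg h]
      have h1 : G.dist a v = 1 := SimpleGraph.dist_eq_one_iff_adj.mpr (G.adj_symm ha)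
      have h2 : G.dist v b = 1 := SimpleGraph.dist_eq_one_iff_adj.mpr hb
      have htri : G.dist a b ≤ G.dist a v + G.dist v b := hG.dist_triangle
      have hpos : 0 < G.dist a b := hG.pos_dist_of_ne hab
      have hne1 : G.dist a b ≠ 1 := fun hh => h (SimpleGraph.dist_eq_one_iff_adj.mp hh)
      omega
  have hdv : ∀ a : V, a ∈ G.neighborSet v → G.dist a v = 1 :=
    fun a ha => SimpleGraph.dist_eq_one_iff_adj.mpr (G.adj_symm ha)
  -- key combinatorial property among neighbors
  have hkeyG : ∀ u u' x y : V, u ∈ G.neighborSet v → u' ∈ G.neighborSet v →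
      x ∈ G.neighborSet v → y ∈ G.neighborSet v →
      u ≠ u' → x ≠ y → x ≠ u → x ≠ u' → y ≠ u → y ≠ u' →
      (G.Adj u x ↔ G.Adj u' x) → (G.Adj u y ↔ G.Adj u' y) → False := by
    intro u u' x y hu hu' hx hy huu hxy hxu hxu' hyu hyu' hiffx hiffy
    have hvx : v ≠ x := fun h => G.irrefl (h ▸ hx)
    have hvy : v ≠ y := fun h => G.irrefl (h ▸ hy)
    have hcard : ({v, x, y} : Finset V).card = 3 := by
      rw [Finset.card_insert_of_notMem (by simp [hvx, hvy]),
        Finset.card_insert_of_notMem (by simp [hxy]), Finset.card_singleton]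
    refine huu (h3 _ hcard u u' ?_)
    intro w hw
    simp only [Finset.mem_insert, Finset.mem_singleton] at hw
    rcases hw with rfl | rfl | rfl
    · rw [hdv u hu, hdv u' hu']
    · rw [hdist u w hu hx (Ne.symm hxu), hdist u' w hu' hx (Ne.symm hxu')]
      exact if_congr hiffx rfl rfl
    · rw [hdist u w hu hy (Ne.symm hyu), hdist u' w hu' hy (Ne.symm hyu')]
      exact if_congr hiffy rfl rfl
  -- enumerate the neighbors
  have hcardN : Fintype.card (G.neighborSet v) = 5 := by
    rw [G.card_neighborSet_eq_degree, hv]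
  set e : Fin 5 ≃ G.neighborSet v := (Fintype.equivFinOfCardEq hcardN).symm with he
  have einj : ∀ {i j : Fin 5}, (e i : V) = (e j : V) → i = j :=
    fun h => e.injective (Subtype.coe_injective h)
  set bv : Fin 10 → Bool :=
    ![decide (G.Adj (e 0) (e 1)), decide (G.Adj (e 0) (e 2)),
      decide (G.Adj (e 0) (e 3)), decide (G.Adj (e 0) (e 4)),
      decide (G.Adj (e 1) (e 2)), decide (G.Adj (e 1) (e 3)),
      decide (G.Adj (e 1) (e 4)), decide (G.Adj (e 2) (e 3)),
      decide (G.Adj (e 2) (e 4)), decide (G.Adj (e 3) (e 4))] with hbv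
  have hAdjOf : ∀ i j : Fin 5, adjOf bv i j = decide (G.Adj (e i) (e j)) := by
    intro i j
    fin_cases i <;> fin_cases j <;> simp only [hbv] <;>
      first
        | exact (decide_eq_false fun h => G.irrefl h).symm
        | rfl
        | exact decide_eq_decide.mpr (G.adj_comm _ _)
  have hpb : pb bv = true := by
    rw [pb, List.all_eq_true]
    rintro ⟨u, u', x, y⟩ hq
    have hbool : ∀ a b c d : Fin 5, a ≠ b → c ≠ d → c ≠ a → c ≠ b → d ≠ a → d ≠ b →
        (!((adjOf bv a c == adjOf bv b c) && (adjOf bv a d == adjOf bv b d))) = true := by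
      intro a b c d h1 h2 h3' h4 h5 h6
      simp only [hAdjOf, Bool.not_eq_true', Bool.and_eq_false_iff, beq_eq_false_iff_ne,
        ne_eq, decide_eq_decide]
      by_contra hcon
      push_neg at hcon
      exact hkeyG (e a) (e b) (e c) (e d) (e a).2 (e b).2 (e c).2 (e d).2
        (fun h => h1 (einj h)) (fun h => h2 (einj h)) (fun h => h3' (einj h))
        (fun h => h4 (einj h)) (fun h => h5 (einj h)) (fun h => h6 (einj h))
        hcon.1 hcon.2
    fin_cases hq <;>
      exact hbool _ _ _ _ (by decide) (by decide) (by decide) (by decide)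
        (by decide) (by decide)
  have hbv10 : bv = ![bv 0, bv 1, bv 2, bv 3, bv 4, bv 5, bv 6, bv 7, bv 8, bv 9] := by
    funext k; fin_cases k <;> rfl
  obtain ⟨σ, hmem, hall⟩ := key (bv 0) (bv 1) (bv 2) (bv 3) (bv 4) (bv 5) (bv 6)
    (bv 7) (bv 8) (bv 9) (by rw [← hbv10]; exact hpb)
  rw [← hbv10] at hall
  rw [List.all_eq_true] at hall
  have hall' : ∀ i j : Fin 5, (i == j) = (σ i == σ j) ∧
      adjOf bv (σ i) (σ j) = cAdj i j := by
    intro i j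
    have h1 := hall i (List.mem_finRange i)
    rw [List.all_eq_true] at h1
    have h2 := h1 j (List.mem_finRange j)
    simp only [Bool.and_eq_true, beq_iff_eq] at h2
    exact h2
  have hinj : Function.Injective σ := by
    intro i j h
    have := (hall' i j).1
    simp [h] at this
    exact this
  have hbij : Function.Bijective σ := Finite.injective_iff_bijective.mp hinj
  refine ⟨SimpleGraph.Iso.symm ⟨(Equiv.ofBijective σ hbij).trans e, ?_⟩⟩
  intro a b
  have hadj := (hall' a b).2
  rw [hAdjOf] at hadj
  have : G.Adj (e (σ a)) (e (σ b)) ↔ (cycleGraph 5).Adj a b := by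
    rw [← cAdj_iff, ← hadj, decide_eq_true_eq]
  simpa [SimpleGraph.comap_adj] using this
end

section
/- If G is a connected graph with res(G) = 3 and v is a vertex of degree 4, then the subgraph induced by N(v) is a path P_4 on four vertices. -/
open SimpleGraph Finset

variable {V : Type*}

private lemma build4 {W : Type*} [Fintype W] (H : SimpleGraph W) (a b c d : W)
    (hcard : Fintype.card W = 4)
    (hab : a ≠ b) (hac : a ≠ c) (had : a ≠ d) (hbc : b ≠ c) (hbd : b ≠ d) (hcd : c ≠ d)
    (e1 : H.Adj a b) (e2 : H.Adj b c) (e3 : H.Adj c d)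
    (n1 : ¬H.Adj a c) (n2 : ¬H.Adj a d) (n3 : ¬H.Adj b d) :
    Nonempty (H ≃g pathGraph 4) := by
  classical
  have hmem : ∀ x : W, x = a ∨ x = b ∨ x = c ∨ x = d := by
    intro x
    by_contra hx
    push_neg at hx
    obtain ⟨h1, h2, h3, h4⟩ := hx
    have hc5 : ({x, a, b, c, d} : Finset W).card = 5 := by
      rw [Finset.card_insert_of_notMem (by simp [h1, h2, h3, h4]),
          Finset.card_insert_of_notMem (by simp [hab, hac, had]),
          Finset.card_insert_of_notMem (by simp [hbc, hbd]),
          Finset.card_insert_of_notMem (by simp [hcd]), Finset.card_singleton]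
    have hle := Finset.card_le_card (Finset.subset_univ ({x, a, b, c, d} : Finset W))
    rw [hc5, Finset.card_univ, hcard] at hle
    omega
  have n1' : ¬H.Adj c a := fun h => n1 h.symm
  have n2' : ¬H.Adj d a := fun h => n2 h.symm
  have n3' : ¬H.Adj d b := fun h => n3 h.symm
  let f : W → Fin 4 := fun x => if x = a then 0 else if x = b then 1 else if x = c then 2 else 3
  let g : Fin 4 → W := ![a, b, c, d]
  have hfa : f a = 0 := by simp [f]
  have hfb : f b = 1 := by simp [f, hab.symm]
  have hfc : f c = 2 := by simp [f, hac.symm, hbc.symm]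
  have hfd : f d = 3 := by simp [f, had.symm, hbd.symm, hcd.symm]
  refine ⟨⟨⟨f, g, ?_, ?_⟩, ?_⟩⟩
  · intro x
    rcases hmem x with h|h|h|h <;> subst h <;> simp [g, hfa, hfb, hfc, hfd]
  · intro i
    fin_cases i <;> simp [g, hfa, hfb, hfc, hfd]
  · intro x y
    rcases hmem x with h|h|h|h <;> subst h <;> rcases hmem y with h|h|h|h <;> subst h <;>
      simp [hfa, hfb, hfc, hfd, pathGraph_adj, e1, e2, e3, n1, n2, n3,
        e1.symm, e2.symm, e3.symm, n1', n2', n3'] <;> decide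

theorem stmt17 [Fintype V] (G : SimpleGraph V) [DecidableRel G.Adj]
    (hG : G.Connected) (hres : G.resolvingNumber = 3) (v : V)
    (hv : G.degree v = 4) :
    Nonempty ((G.induce (G.neighborSet v)) ≃g pathGraph 4) := by
  classical
  classical
  have hP : ∀ W : Finset V, W.card = 3 → G.IsResolvingSet W := by
    have hne : {k | ∀ W : Finset V, W.card = k → G.IsResolvingSet W}.Nonempty := by
      by_contra h
      rw [Set.not_nonempty_iff_eq_empty] at h
      rw [SimpleGraph.resolvingNumber, h, Nat.sInf_empty] at hres
      exact absurd hres (by norm_num)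
    have hm := Nat.sInf_mem hne
    rw [show sInf {k | ∀ W : Finset V, W.card = k → G.IsResolvingSet W} = 3 from hres] at hm
    exact hm
  have key3 : ∀ u w x y z : V, x ≠ y → x ≠ z → y ≠ z →
      G.dist u x = G.dist w x → G.dist u y = G.dist w y → G.dist u z = G.dist w z → u = w := by
    intro u w x y z hxy hxz hyz h1 h2 h3
    have hc : ({x, y, z} : Finset V).card = 3 := by
      rw [Finset.card_insert_of_notMem (by simp [hxy, hxz]),
          Finset.card_insert_of_notMem (by simp [hyz]), Finset.card_singleton]
    refine hP _ hc u w ?_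
    intro t ht
    simp only [Finset.mem_insert, Finset.mem_singleton] at ht
    rcases ht with rfl|rfl|rfl <;> assumption
  have hadj1 : ∀ s t : V, G.Adj s t → G.dist s t = 1 := fun s t h =>
    dist_eq_one_iff_adj.mpr h
  have hdist2 : ∀ s t : V, G.Adj v s → G.Adj v t → s ≠ t → ¬G.Adj s t → G.dist s t = 2 := by
    intro s t hs ht hne hna
    have h1 : G.dist s t ≤ 2 := by
      calc G.dist s t ≤ G.dist s v + G.dist v t := hG.dist_triangle
        _ = 2 := by rw [hadj1 s v hs.symm, hadj1 v t ht]
    have h0 : G.dist s t ≠ 0 := fun h => hne (hG.dist_eq_zero_iff.mp h)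
    have h1' : G.dist s t ≠ 1 := fun h => hna (dist_eq_one_iff_adj.mp h)
    omega
  have hC1 : ∀ x p q r : V, G.Adj v x → G.Adj v p → G.Adj v q → G.Adj v r →
      p ≠ q → p ≠ r → q ≠ r → G.Adj x p → G.Adj x q → G.Adj x r → False := by
    intro x p q r hx hp hq hr hpq hpr hqr hxp hxq hxr
    exact G.ne_of_adj hx (key3 v x p q r hpq hpr hqr
      (by rw [hadj1 v p hp, hadj1 x p hxp])
      (by rw [hadj1 v q hq, hadj1 x q hxq])
      (by rw [hadj1 v r hr, hadj1 x r hxr]))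
  have hC2 : ∀ x y z w : V, G.Adj v x → G.Adj v y → G.Adj v z → G.Adj v w →
      x ≠ y → z ≠ w → z ≠ x → z ≠ y → w ≠ x → w ≠ y →
      (G.Adj z x ↔ G.Adj z y) → (G.Adj w x ↔ G.Adj w y) → False := by
    intro x y z w hx hy hz hw hxy hzw hzx hzy hwx hwy h1 h2
    have dz : G.dist z x = G.dist z y := by
      by_cases h : G.Adj z x
      · rw [hadj1 _ _ h, hadj1 _ _ (h1.mp h)]
      · rw [hdist2 z x hz hx hzx h, hdist2 z y hz hy hzy (fun hh => h (h1.mpr hh))]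
    have dw : G.dist w x = G.dist w y := by
      by_cases h : G.Adj w x
      · rw [hadj1 _ _ h, hadj1 _ _ (h2.mp h)]
      · rw [hdist2 w x hw hx hwx h, hdist2 w y hw hy hwy (fun hh => h (h2.mpr hh))]
    refine hxy (key3 x y v z w (G.ne_of_adj hz) (G.ne_of_adj hw) hzw ?_ ?_ ?_)
    · rw [SimpleGraph.dist_comm (G := G) (u := x) (v := v), SimpleGraph.dist_comm (G := G) (u := y) (v := v), hadj1 v x hx, hadj1 v y hy]
    · rw [SimpleGraph.dist_comm (G := G) (u := x) (v := z), SimpleGraph.dist_comm (G := G) (u := y) (v := z), dz]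
    · rw [SimpleGraph.dist_comm (G := G) (u := x) (v := w), SimpleGraph.dist_comm (G := G) (u := y) (v := w), dw]
  have hcard : Fintype.card (G.neighborSet v) = 4 := by
    rw [G.card_neighborSet_eq_degree]; exact hv
  let e := Fintype.equivFinOfCardEq hcard
  let a : ↥(G.neighborSet v) := e.symm 0
  let b : ↥(G.neighborSet v) := e.symm 1
  let c : ↥(G.neighborSet v) := e.symm 2
  let d : ↥(G.neighborSet v) := e.symm 3
  have kab : a ≠ b := fun hh => absurd (e.symm.injective hh) (by decide)
  have kac : a ≠ c := fun hh => absurd (e.symm.injective hh) (by decide)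
  have kad : a ≠ d := fun hh => absurd (e.symm.injective hh) (by decide)
  have kbc : b ≠ c := fun hh => absurd (e.symm.injective hh) (by decide)
  have kbd : b ≠ d := fun hh => absurd (e.symm.injective hh) (by decide)
  have kcd : c ≠ d := fun hh => absurd (e.symm.injective hh) (by decide)
  have nab : (a:V) ≠ (b:V) := Subtype.coe_ne_coe.mpr kab
  have nba : (b:V) ≠ (a:V) := nab.symm
  have nac : (a:V) ≠ (c:V) := Subtype.coe_ne_coe.mpr kac
  have nca : (c:V) ≠ (a:V) := nac.symm
  have nad : (a:V) ≠ (d:V) := Subtype.coe_ne_coe.mpr kad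
  have nda : (d:V) ≠ (a:V) := nad.symm
  have nbc : (b:V) ≠ (c:V) := Subtype.coe_ne_coe.mpr kbc
  have ncb : (c:V) ≠ (b:V) := nbc.symm
  have nbd : (b:V) ≠ (d:V) := Subtype.coe_ne_coe.mpr kbd
  have ndb : (d:V) ≠ (b:V) := nbd.symm
  have ncd : (c:V) ≠ (d:V) := Subtype.coe_ne_coe.mpr kcd
  have ndc : (d:V) ≠ (c:V) := ncd.symm
  have ha : G.Adj v (a:V) := a.2
  have hb : G.Adj v (b:V) := b.2
  have hc : G.Adj v (c:V) := c.2
  have hd : G.Adj v (d:V) := d.2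
  by_cases Hab : G.Adj (a:V) (b:V) <;> by_cases Hac : G.Adj (a:V) (c:V) <;> by_cases Had : G.Adj (a:V) (d:V) <;> by_cases Hbc : G.Adj (b:V) (c:V) <;> by_cases Hbd : G.Adj (b:V) (d:V) <;> by_cases Hcd : G.Adj (c:V) (d:V)
  all_goals (first | (have Hba : G.Adj (b:V) (a:V) := Hab.symm) | (have Hba : ¬G.Adj (b:V) (a:V) := fun hh => Hab hh.symm))
  all_goals (first | (have Hca : G.Adj (c:V) (a:V) := Hac.symm) | (have Hca : ¬G.Adj (c:V) (a:V) := fun hh => Hac hh.symm))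
  all_goals (first | (have Hda : G.Adj (d:V) (a:V) := Had.symm) | (have Hda : ¬G.Adj (d:V) (a:V) := fun hh => Had hh.symm))
  all_goals (first | (have Hcb : G.Adj (c:V) (b:V) := Hbc.symm) | (have Hcb : ¬G.Adj (c:V) (b:V) := fun hh => Hbc hh.symm))
  all_goals (first | (have Hdb : G.Adj (d:V) (b:V) := Hbd.symm) | (have Hdb : ¬G.Adj (d:V) (b:V) := fun hh => Hbd hh.symm))
  all_goals (first | (have Hdc : G.Adj (d:V) (c:V) := Hcd.symm) | (have Hdc : ¬G.Adj (d:V) (c:V) := fun hh => Hcd hh.symm))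
  all_goals try (exfalso; first
    | exact hC1 ↑a ↑b ↑c ↑d ha hb hc hd nbc nbd ncd Hab Hac Had
    | exact hC1 ↑b ↑a ↑c ↑d hb ha hc hd nac nad ncd Hba Hbc Hbd
    | exact hC1 ↑c ↑a ↑b ↑d hc ha hb hd nab nad nbd Hca Hcb Hcd
    | exact hC1 ↑d ↑a ↑b ↑c hd ha hb hc nab nac nbc Hda Hdb Hdc
    | exact hC2 ↑a ↑b ↑c ↑d ha hb hc hd nab ncd nca ncb nda ndb (by first | exact iff_of_true Hca Hcb | exact iff_of_false Hca Hcb) (by first | exact iff_of_true Hda Hdb | exact iff_of_false Hda Hdb)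
    | exact hC2 ↑a ↑c ↑b ↑d ha hc hb hd nac nbd nba nbc nda ndc (by first | exact iff_of_true Hba Hbc | exact iff_of_false Hba Hbc) (by first | exact iff_of_true Hda Hdc | exact iff_of_false Hda Hdc)
    | exact hC2 ↑a ↑d ↑b ↑c ha hd hb hc nad nbc nba nbd nca ncd (by first | exact iff_of_true Hba Hbd | exact iff_of_false Hba Hbd) (by first | exact iff_of_true Hca Hcd | exact iff_of_false Hca Hcd)
    | exact hC2 ↑b ↑c ↑a ↑d hb hc ha hd nbc nad nab nac ndb ndc (by first | exact iff_of_true Hab Hac | exact iff_of_false Hab Hac) (by first | exact iff_of_true Hdb Hdc | exact iff_of_false Hdb Hdc)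
    | exact hC2 ↑b ↑d ↑a ↑c hb hd ha hc nbd nac nab nad ncb ncd (by first | exact iff_of_true Hab Had | exact iff_of_false Hab Had) (by first | exact iff_of_true Hcb Hcd | exact iff_of_false Hcb Hcd)
    | exact hC2 ↑c ↑d ↑a ↑b hc hd ha hb ncd nab nac nad nbc nbd (by first | exact iff_of_true Hac Had | exact iff_of_false Hac Had) (by first | exact iff_of_true Hbc Hbd | exact iff_of_false Hbc Hbd))
  all_goals (first
    | exact build4 _ a b c d hcard kab kac kad kbc kbd kcd Hab Hbc Hcd Hac Had Hbd
    | exact build4 _ a b d c hcard kab kad kac kbd kbc kcd.symm Hab Hbd Hdc Had Hac Hbc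
    | exact build4 _ a c b d hcard kac kab kad kbc.symm kcd kbd Hac Hcb Hbd Hab Had Hcd
    | exact build4 _ a c d b hcard kac kad kab kcd kbc.symm kbd.symm Hac Hcd Hdb Had Hab Hcb
    | exact build4 _ a d b c hcard kad kab kac kbd.symm kcd.symm kbc Had Hdb Hbc Hab Hac Hdc
    | exact build4 _ a d c b hcard kad kac kab kcd.symm kbd.symm kbc.symm Had Hdc Hcb Hac Hab Hdb
    | exact build4 _ b a c d hcard kab.symm kbc kbd kac kad kcd Hba Hac Hcd Hbc Hbd Had
    | exact build4 _ b a d c hcard kab.symm kbd kbc kad kac kcd.symm Hba Had Hdc Hbd Hbc Hac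
    | exact build4 _ b c a d hcard kbc kab.symm kbd kac.symm kcd kad Hbc Hca Had Hba Hbd Hcd
    | exact build4 _ b c d a hcard kbc kbd kab.symm kcd kac.symm kad.symm Hbc Hcd Hda Hbd Hba Hca
    | exact build4 _ b d a c hcard kbd kab.symm kbc kad.symm kcd.symm kac Hbd Hda Hac Hba Hbc Hdc
    | exact build4 _ b d c a hcard kbd kbc kab.symm kcd.symm kad.symm kac.symm Hbd Hdc Hca Hbc Hba Hda
    | exact build4 _ c a b d hcard kac.symm kbc.symm kcd kab kad kbd Hca Hab Hbd Hcb Hcd Had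
    | exact build4 _ c a d b hcard kac.symm kcd kbc.symm kad kab kbd.symm Hca Had Hdb Hcd Hcb Hab
    | exact build4 _ c b a d hcard kbc.symm kac.symm kcd kab.symm kbd kad Hcb Hba Had Hca Hcd Hbd
    | exact build4 _ c b d a hcard kbc.symm kcd kac.symm kbd kab.symm kad.symm Hcb Hbd Hda Hcd Hca Hba
    | exact build4 _ c d a b hcard kcd kac.symm kbc.symm kad.symm kbd.symm kab Hcd Hda Hab Hca Hcb Hdb
    | exact build4 _ c d b a hcard kcd kbc.symm kac.symm kbd.symm kad.symm kab.symm Hcd Hdb Hba Hcb Hca Hda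
    | exact build4 _ d a b c hcard kad.symm kbd.symm kcd.symm kab kac kbc Hda Hab Hbc Hdb Hdc Hac
    | exact build4 _ d a c b hcard kad.symm kcd.symm kbd.symm kac kab kbc.symm Hda Hac Hcb Hdc Hdb Hab
    | exact build4 _ d b a c hcard kbd.symm kad.symm kcd.symm kab.symm kbc kac Hdb Hba Hac Hda Hdc Hbc
    | exact build4 _ d b c a hcard kbd.symm kcd.symm kad.symm kbc kab.symm kac.symm Hdb Hbc Hca Hdc Hda Hba
    | exact build4 _ d c a b hcard kcd.symm kad.symm kbd.symm kac.symm kbc.symm kab Hdc Hca Hab Hda Hdb Hcb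
    | exact build4 _ d c b a hcard kcd.symm kbd.symm kad.symm kbc.symm kac.symm kab.symm Hdc Hcb Hba Hdb Hda Hca)
end
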